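/- arXiv:1303.1290 — 8 statements merged into one kernel-verified Lean document; each statement's English description precedes it below -/
import Mathlib

section
/- For every i ∈ {3,4,5}, every finite type β, and every subgroup H of Equiv.Perm β, the direct sum C_i ⊕ H, a subgroup of Equiv.Perm (Fin i ⊕ β), is not k-representable for any k ≥ 2. -/
/-- The symmetry (invariance) group of a function `f` on boolean tuples indexed by `α`:
all permutations `σ` with `f (x ∘ σ) = f x` for every `x : α → Bool`. -/
def symmGroup {α V : Type*} (f : (α → Bool) → V) : Subgroup (Equiv.Perm α) where
  carrier := {σ | ∀ x : α → Bool, f (x ∘ σ) = f x}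
  one_mem' := by intro x; simp
  mul_mem' := by
    intro a b ha hb x
    have h : x ∘ ⇑(a * b) = (x ∘ ⇑a) ∘ ⇑b := by
      ext y; simp [Equiv.Perm.mul_apply, Function.comp]
    rw [h, hb, ha]
  inv_mem' := by
    intro a ha x
    have h := ha (x ∘ ⇑a⁻¹)
    have h2 : (x ∘ ⇑a⁻¹) ∘ ⇑a = x := by
      ext y; simp [Function.comp]
    rw [h2] at h
    exact h.symm

/-- A subgroup of `Equiv.Perm α` is `k`-representable if it is the symmetry group of a
`k`-valued boolean function. -/
def Representable (k : ℕ) {α : Type*} (G : Subgroup (Equiv.Perm α)) : Prop :=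
  ∃ f : (α → Bool) → Fin k, G = symmGroup f

/-- The direct sum of two permutation groups, acting on the disjoint union. -/
def directSum {α β : Type*} (G : Subgroup (Equiv.Perm α)) (H : Subgroup (Equiv.Perm β)) :
    Subgroup (Equiv.Perm (α ⊕ β)) :=
  (G.prod H).map (Equiv.Perm.sumCongrHom α β)

/-- A permutation group is regular if it is transitive and only the identity has a fixed point. -/
def IsRegularPermGroup {α : Type*} (G : Subgroup (Equiv.Perm α)) : Prop :=
  (∀ a b : α, ∃ σ ∈ G, σ a = b) ∧ ∀ σ ∈ G, ∀ a : α, σ a = a → σ = 1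

/-- `B` is a direct sum of regular groups: under some identification of `α` with a finite
sigma type, `B` consists exactly of the permutations preserving each block and acting on
block `i` as an element of a fixed regular group `G i`. -/
def IsDirectSumOfRegular {α : Type*} (B : Subgroup (Equiv.Perm α)) : Prop :=
  ∃ (ι : Type) (_ : Fintype ι) (β : ι → Type) (_ : ∀ i, Fintype (β i))
    (e : α ≃ Σ i, β i) (G : ∀ i, Subgroup (Equiv.Perm (β i))),
    (∀ i, IsRegularPermGroup (G i)) ∧
    ∀ π : Equiv.Perm α, π ∈ B ↔
      ∃ g : ∀ i, Equiv.Perm (β i), (∀ i, g i ∈ G i) ∧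
        ∀ a : α, e (π a) = ⟨(e a).1, g (e a).1 (e a).2⟩

/-- `C_n`, the cyclic group generated by the cycle `0 ↦ 1 ↦ ⋯ ↦ n-1 ↦ 0`. -/
def Cgroup (n : ℕ) : Subgroup (Equiv.Perm (Fin n)) := Subgroup.zpowers (finRotate n)

/-- The Klein four-group `K₄ ≤ S₄` generated by `(0 1)(2 3)` and `(0 2)(1 3)`. -/
def K4 : Subgroup (Equiv.Perm (Fin 4)) :=
  Subgroup.closure {Equiv.swap 0 1 * Equiv.swap 2 3, Equiv.swap 0 2 * Equiv.swap 1 3}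

/-- Permutation isomorphism of permutation groups. -/
def PermIso {α β : Type*} (G : Subgroup (Equiv.Perm α)) (H : Subgroup (Equiv.Perm β)) : Prop :=
  ∃ e : α ≃ β, ∀ σ : Equiv.Perm α, σ ∈ G ↔ e.permCongr σ ∈ H

/-- A set `S` is regular in `H` if the identity is the only element of `H` mapping `S` to itself. -/
def IsRegularSet {α : Type*} (S : Set α) (H : Subgroup (Equiv.Perm α)) : Prop :=
  ∀ σ ∈ H, ⇑σ '' S = S → σ = 1

/-- The subdirect sum `G/M ⊕_φ H/N`: all `Equiv.sumCongr σ τ` with `σ ∈ G`, `τ ∈ H` and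
`φ (σ M) = τ N`. -/
def subdirectSum {α β : Type*} (G : Subgroup (Equiv.Perm α)) (H : Subgroup (Equiv.Perm β))
    (M : Subgroup G) [M.Normal] (N : Subgroup H) [N.Normal]
    (φ : G ⧸ M ≃* H ⧸ N) : Subgroup (Equiv.Perm (α ⊕ β)) where
  carrier := {π | ∃ (σ : G) (τ : H),
    φ (QuotientGroup.mk σ) = QuotientGroup.mk τ ∧
    π = Equiv.Perm.sumCongrHom α β ((σ : Equiv.Perm α), (τ : Equiv.Perm β))}
  one_mem' := ⟨1, 1, by simp, by simp⟩
  mul_mem' := by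
    rintro _ _ ⟨σ₁, τ₁, h1, rfl⟩ ⟨σ₂, τ₂, h2, rfl⟩
    refine ⟨σ₁ * σ₂, τ₁ * τ₂, ?_, ?_⟩
    · rw [QuotientGroup.mk_mul, QuotientGroup.mk_mul, map_mul, h1, h2]
    · rw [← map_mul]
      rfl
  inv_mem' := by
    rintro _ ⟨σ, τ, h, rfl⟩
    refine ⟨σ⁻¹, τ⁻¹, ?_, ?_⟩
    · rw [QuotientGroup.mk_inv, QuotientGroup.mk_inv, map_inv, h]
    · rw [← map_inv]
      rfl


private lemma mem_zpowers_fin_pow {G : Type*} [Group G] [Finite G] {g r : G} {n : ℕ}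
    (hn : 0 < n) (h1 : g ^ n = 1) (h : r ∈ Subgroup.zpowers g) :
    ∃ m : Fin n, g ^ (m : ℕ) = r := by
  rw [← mem_powers_iff_mem_zpowers] at h
  obtain ⟨m, hm⟩ := h
  exact ⟨⟨m % n, Nat.mod_lt _ hn⟩, by rw [← pow_eq_pow_mod m h1]; exact hm⟩

private lemma key_not_rep {i : ℕ} (r : Equiv.Perm (Fin i))
    (hr : r ∉ Cgroup i)
    (horb : ∀ y : Fin i → Bool, ∃ σ ∈ Cgroup i, y ∘ ⇑r = y ∘ ⇑σ)
    {β : Type*} [Fintype β] (H : Subgroup (Equiv.Perm β)) (k : ℕ) :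
    ¬ Representable k (directSum (Cgroup i) H) := by
  rintro ⟨f, hf⟩
  have hmem : Equiv.sumCongr r (1 : Equiv.Perm β) ∈ symmGroup f := by
    intro x
    obtain ⟨σ, hσ, hy⟩ := horb (x ∘ Sum.inl)
    have hσmem : Equiv.sumCongr σ 1 ∈ directSum (Cgroup i) H :=
      ⟨(σ, 1), ⟨hσ, H.one_mem⟩, rfl⟩
    rw [hf] at hσmem
    have hx : x ∘ ⇑(Equiv.sumCongr r (1 : Equiv.Perm β)) =
        x ∘ ⇑(Equiv.sumCongr σ (1 : Equiv.Perm β)) := by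
      funext a
      cases a with
      | inl a => exact congrFun hy a
      | inr b => rfl
    rw [hx]
    exact hσmem x
  rw [← hf] at hmem
  obtain ⟨⟨σ, τ⟩, ⟨hσ, hτ⟩, heq⟩ := hmem
  apply hr
  have hσr : σ = r := by
    apply Equiv.ext
    intro a
    have := congrArg (fun π : Equiv.Perm (Fin i ⊕ β) => π (Sum.inl a)) heq
    simpa [Equiv.Perm.sumCongrHom] using this
  rwa [hσr] at hσ

theorem directSum_cyclic_not_representable
    (i : ℕ) (hi : i ∈ ({3, 4, 5} : Set ℕ)) {β : Type*} [Fintype β]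
    (H : Subgroup (Equiv.Perm β)) (k : ℕ) (hk : 2 ≤ k) :
    ¬ Representable k (directSum (Cgroup i) H) := by
  simp only [Set.mem_insert_iff, Set.mem_singleton_iff] at hi
  rcases hi with rfl | rfl | rfl
  · refine key_not_rep (Equiv.swap 1 2) ?_ ?_ H k
    · intro h
      obtain ⟨m, hm⟩ := mem_zpowers_fin_pow (n := 3) (by norm_num) (by decide) h
      revert hm
      revert m
      decide
    · have hd : ∀ y : Fin 3 → Bool, ∃ m : Fin 3,
          y ∘ ⇑(Equiv.swap 1 2) = y ∘ ⇑((finRotate 3) ^ (m : ℕ)) := by decide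
      intro y
      obtain ⟨m, hm⟩ := hd y
      exact ⟨_, Subgroup.pow_mem _ (Subgroup.mem_zpowers _) _, hm⟩
  · refine key_not_rep (Equiv.swap 1 3) ?_ ?_ H k
    · intro h
      obtain ⟨m, hm⟩ := mem_zpowers_fin_pow (n := 4) (by norm_num) (by decide) h
      revert hm
      revert m
      decide
    · have hd : ∀ y : Fin 4 → Bool, ∃ m : Fin 4,
          y ∘ ⇑(Equiv.swap 1 3) = y ∘ ⇑((finRotate 4) ^ (m : ℕ)) := by decide
      intro y
      obtain ⟨m, hm⟩ := hd y
      exact ⟨_, Subgroup.pow_mem _ (Subgroup.mem_zpowers _) _, hm⟩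
  · refine key_not_rep (Equiv.swap 1 4 * Equiv.swap 2 3) ?_ ?_ H k
    · intro h
      obtain ⟨m, hm⟩ := mem_zpowers_fin_pow (n := 5) (by norm_num) (by decide) h
      revert hm
      revert m
      decide
    · have hd : ∀ y : Fin 5 → Bool, ∃ m : Fin 5,
          y ∘ ⇑((Equiv.swap 1 4 * Equiv.swap 2 3 : Equiv.Perm (Fin 5))) = y ∘ ⇑((finRotate 5) ^ (m : ℕ)) := by decide
      intro y
      obtain ⟨m, hm⟩ := hd y
      exact ⟨_, Subgroup.pow_mem _ (Subgroup.mem_zpowers _) _, hm⟩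
end

section
/- For every i ∈ {3,4,5}, the cyclic group C_i, a subgroup of Equiv.Perm (Fin i), is not k-representable for any k ≥ 2. -/
lemma cgroup_not_rep (n : ℕ) (ρ : Equiv.Perm (Fin n))
    (horbit : ∀ x : Fin n → Bool, ∃ m : Fin n,
      x ∘ ⇑ρ = x ∘ ⇑((finRotate n) ^ (m : ℕ)))
    (hr : (finRotate n) ^ n = 1)
    (hpow : ∀ m : Fin n, (finRotate n) ^ (m : ℕ) ≠ ρ)
    (hn : 0 < n)
    (k : ℕ) : ¬ Representable k (Cgroup n) := by
  rintro ⟨f, hf⟩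
  have hρ : ρ ∈ symmGroup f := by
    intro x
    obtain ⟨m, hm⟩ := horbit x
    have hmem : (finRotate n) ^ (m : ℕ) ∈ symmGroup f := by
      rw [← hf]
      exact pow_mem (Subgroup.mem_zpowers _) _
    calc f (x ∘ ⇑ρ) = f (x ∘ ⇑((finRotate n) ^ (m : ℕ))) := by rw [hm]
      _ = f x := hmem x
  rw [← hf] at hρ
  have hρ' : ρ ∈ Submonoid.powers (finRotate n) :=
    (mem_powers_iff_mem_zpowers).mpr hρ
  obtain ⟨m, hm⟩ := hρ'
  have hmod : (finRotate n) ^ m = (finRotate n) ^ (m % n) := by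
    conv_lhs => rw [← Nat.mod_add_div m n]
    rw [pow_add, pow_mul, hr, one_pow, mul_one]
  have hlt : m % n < n := Nat.mod_lt _ hn
  exact hpow ⟨m % n, hlt⟩ (by rw [← hmod]; exact hm) -- contradiction

theorem cyclic_345_not_representable
    (i : ℕ) (hi : i ∈ ({3, 4, 5} : Set ℕ)) (k : ℕ) (hk : 2 ≤ k) :
    ¬ Representable k (Cgroup i) := by
  rcases hi with rfl | rfl | rfl
  · exact cgroup_not_rep 3 (Equiv.swap 1 2) (by decide) (by decide) (by decide)
      (by norm_num) k
  · exact cgroup_not_rep 4 (Equiv.swap 1 3) (by decide) (by decide) (by decide)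
      (by norm_num) k
  · exact cgroup_not_rep 5 (Equiv.swap 1 4 * Equiv.swap 2 3) (by decide) (by decide)
      (by decide) (by norm_num) k
end

section
/- For every natural number n with n ∉ {3,4,5}, the cyclic group C_n, a subgroup of Equiv.Perm (Fin n), is 2-representable. -/
namespace CycRep
variable {m : ℕ}

def pInd (c : Fin (m+1)) : Fin (m+1) → Bool := fun i => decide (i = c ∨ i = c + 1)
def tInd (c : Fin (m+1)) : Fin (m+1) → Bool := fun i => decide (i = c ∨ i = c + 1 ∨ i = c + 3)
def goodF (x : Fin (m+1) → Bool) : Prop := (∃ c, x = pInd c) ∨ (∃ c, x = tInd c)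

open scoped Classical in
noncomputable def myf (x : Fin (m+1) → Bool) : Fin 2 := if goodF x then 1 else 0

end CycRep

namespace CycRep

set_option maxHeartbeats 1000000 in
open Fin.NatCast Fin.CommRing in
theorem main (m : ℕ) (hm : 5 ≤ m) : Representable 2 (Cgroup (m+1)) := by
  have keyc : ∀ j k : ℕ, j < m+1 → k < m+1 → ((j : Fin (m+1)) = (k : Fin (m+1))) → j = k := by
    intro j k hj hk h
    have := congrArg Fin.val h
    rwa [Fin.val_natCast, Fin.val_natCast, Nat.mod_eq_of_lt hj, Nat.mod_eq_of_lt hk] at this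
  set g := finRotate (m+1) with hgdef
  have hgapp : ∀ i : Fin (m+1), g i = i + 1 := fun i => finRotate_succ_apply i
  have cancel : ∀ x y : Fin (m+1) → Bool, x ∘ ⇑g = y ∘ ⇑g → x = y := by
    intro x y h; funext j
    have := congrFun h (g⁻¹ j)
    simpa using this
  have pInd_comp : ∀ c : Fin (m+1), pInd c ∘ ⇑g = pInd (c - 1) := by
    intro c; funext i
    simp only [Function.comp_apply, pInd, hgapp]
    rw [decide_eq_decide]
    constructor <;> rintro (h | h) <;>
      first
        | exact Or.inl (by linear_combination h)
        | exact Or.inr (by linear_combination h)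
  have tInd_comp : ∀ c : Fin (m+1), tInd c ∘ ⇑g = tInd (c - 1) := by
    intro c; funext i
    simp only [Function.comp_apply, tInd, hgapp]
    rw [decide_eq_decide]
    constructor <;> rintro (h | h | h) <;>
      first
        | exact Or.inl (by linear_combination h)
        | exact Or.inr (Or.inl (by linear_combination h))
        | exact Or.inr (Or.inr (by linear_combination h))
  have good_comp : ∀ x : Fin (m+1) → Bool, goodF (x ∘ ⇑g) ↔ goodF x := by
    intro x
    constructor
    · rintro (⟨d, hd⟩ | ⟨d, hd⟩)
      · exact Or.inl ⟨d + 1, cancel _ _ (by rw [hd, pInd_comp]; congr 1; ring)⟩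
      · exact Or.inr ⟨d + 1, cancel _ _ (by rw [hd, tInd_comp]; congr 1; ring)⟩
    · rintro (⟨d, hd⟩ | ⟨d, hd⟩)
      · exact Or.inl ⟨d - 1, by rw [hd, pInd_comp]⟩
      · exact Or.inr ⟨d - 1, by rw [hd, tInd_comp]⟩
  refine ⟨myf, le_antisymm ?_ ?_⟩
  · show Subgroup.zpowers g ≤ symmGroup myf
    refine Subgroup.zpowers_le.mpr ?_
    show ∀ x : Fin (m+1) → Bool, myf (x ∘ ⇑g) = myf x
    intro x
    classical
    unfold myf
    exact if_congr (good_comp x) rfl rfl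
  · intro σ hσ
    have hσ' : ∀ x : Fin (m+1) → Bool, myf (x ∘ ⇑σ) = myf x := hσ
    have hGood : ∀ x : Fin (m+1) → Bool, goodF (x ∘ ⇑σ) ↔ goodF x := by
      intro x
      have hx := hσ' x
      unfold myf at hx
      constructor
      · intro h1; by_contra h2; rw [if_pos h1, if_neg h2] at hx; exact absurd hx (by decide)
      · intro h2; by_contra h1; rw [if_neg h1, if_pos h2] at hx; exact absurd hx (by decide)
    set τ : Equiv.Perm (Fin (m+1)) := σ⁻¹ with hτdef
    have happ : ∀ u, σ (τ u) = u := fun u => Equiv.apply_symm_apply σ u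
    have hsig : ∀ i u : Fin (m+1), σ i = u ↔ i = τ u := by
      intro i u
      constructor
      · intro h; exact σ.injective (by rw [h, happ])
      · intro h; rw [h, happ]
    have hpair : ∀ c : Fin (m+1), ∃ d : Fin (m+1),
        ∀ i, (i = τ c ∨ i = τ (c+1)) ↔ (i = d ∨ i = d + 1) := by
      intro c
      have h1 : goodF (pInd c ∘ ⇑σ) := (hGood (pInd c)).mpr (Or.inl ⟨c, rfl⟩)
      rcases h1 with ⟨d, hd⟩ | ⟨d, hd⟩
      · refine ⟨d, fun i => ?_⟩
        have hthis : (σ i = c ∨ σ i = c + 1) ↔ (i = d ∨ i = d + 1) := by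
          have := congrFun hd i
          simp only [pInd, Function.comp_apply] at this
          exact decide_eq_decide.mp this
        rw [hsig i c, hsig i (c+1)] at hthis
        exact hthis
      · exfalso
        have hiff : ∀ i, (σ i = c ∨ σ i = c + 1) ↔ (i = d ∨ i = d + 1 ∨ i = d + 3) := by
          intro i
          have := congrFun hd i
          simp only [pInd, tInd, Function.comp_apply] at this
          exact decide_eq_decide.mp this
        have md : d = τ c ∨ d = τ (c+1) := by
          have h := (hiff d).mpr (Or.inl rfl)
          rcases h with h | h
          · exact Or.inl ((hsig _ _).mp h)
          · exact Or.inr ((hsig _ _).mp h)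
        have md1 : d + 1 = τ c ∨ d + 1 = τ (c+1) := by
          have h := (hiff (d+1)).mpr (Or.inr (Or.inl rfl))
          rcases h with h | h
          · exact Or.inl ((hsig _ _).mp h)
          · exact Or.inr ((hsig _ _).mp h)
        have md3 : d + 3 = τ c ∨ d + 3 = τ (c+1) := by
          have h := (hiff (d+3)).mpr (Or.inr (Or.inr rfl))
          rcases h with h | h
          · exact Or.inl ((hsig _ _).mp h)
          · exact Or.inr ((hsig _ _).mp h)
        rcases md with h | h <;> rcases md1 with h1 | h1 <;> rcases md3 with h3 | h3 <;>
          first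
            | exact absurd (keyc 1 0 (by omega) (by omega)
                (by push_cast; linear_combination h1 - h)) (by omega)
            | exact absurd (keyc 3 0 (by omega) (by omega)
                (by push_cast; linear_combination h3 - h)) (by omega)
            | exact absurd (keyc 3 1 (by omega) (by omega)
                (by push_cast; linear_combination h3 - h1)) (by omega)
    have P : ∀ c : Fin (m+1), τ (c + 1) = τ c + 1 ∨ τ c = τ (c + 1) + 1 := by
      intro c
      obtain ⟨d, hd⟩ := hpair c
      have h0 : τ c = d ∨ τ c = d + 1 := (hd (τ c)).mp (Or.inl rfl)
      have h1 : τ (c+1) = d ∨ τ (c+1) = d + 1 := (hd (τ (c+1))).mp (Or.inr rfl)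
      have hne : τ c ≠ τ (c+1) := by
        intro h
        have hcc := τ.injective h
        exact absurd (keyc 0 1 (by omega) (by omega)
          (by push_cast; linear_combination hcc)) (by omega)
      rcases h0 with h0 | h0 <;> rcases h1 with h1 | h1
      · exact absurd (h0.trans h1.symm) hne
      · exact Or.inl (by rw [h1, h0])
      · exact Or.inr (by rw [h0, h1])
      · exact absurd (h0.trans h1.symm) hne
    show σ ∈ Subgroup.zpowers g
    rcases P 0 with HR | HL
    · rw [zero_add] at HR
      have step : ∀ k : ℕ, τ ((k : Fin (m+1)) + 1) = τ (k : Fin (m+1)) + 1 := by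
        intro k
        induction k with
        | zero => simpa using HR
        | succ k ih =>
          have hc : ((k+1 : ℕ) : Fin (m+1)) = (k : Fin (m+1)) + 1 := by push_cast; ring
          rw [hc]
          rcases P ((k : Fin (m+1)) + 1) with h | h
          · exact h
          · exfalso
            rw [ih] at h
            have h2 : τ (((k : Fin (m+1)) + 1) + 1) = τ (k : Fin (m+1)) :=
              (add_right_cancel h.symm)
            have h3 := τ.injective h2
            exact absurd (keyc 2 0 (by omega) (by omega)
              (by push_cast; linear_combination h3)) (by omega)
      have lin : ∀ k : ℕ, τ (k : Fin (m+1)) = τ 0 + (k : Fin (m+1)) := by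
        intro k
        induction k with
        | zero => simp
        | succ k ih =>
          have hc : ((k+1 : ℕ) : Fin (m+1)) = (k : Fin (m+1)) + 1 := by push_cast; ring
          rw [hc, step k, ih]; ring
      have gpow : ∀ (k : ℕ) (i : Fin (m+1)), (g ^ k) i = i + (k : Fin (m+1)) := by
        intro k
        induction k with
        | zero => intro i; simp
        | succ k ih =>
          intro i
          rw [pow_succ, Equiv.Perm.mul_apply, hgapp, ih]
          push_cast; ring
      have hτeq : τ = g ^ (τ 0).val := by
        apply Equiv.ext; intro c
        rw [gpow]
        have hv : ((c.val : ℕ) : Fin (m+1)) = c := Fin.cast_val_eq_self c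
        have : τ c = τ 0 + c := by
          conv_lhs => rw [← hv]
          rw [lin, hv]
        rw [this, Fin.cast_val_eq_self]; ring
      have hτmem : τ ∈ Subgroup.zpowers g := by
        rw [hτeq]; exact pow_mem (Subgroup.mem_zpowers g) _
      have : σ = τ⁻¹ := by rw [hτdef, inv_inv]
      rw [this]; exact inv_mem hτmem
    · rw [zero_add] at HL
      exfalso
      have step' : ∀ k : ℕ, τ (k : Fin (m+1)) = τ ((k : Fin (m+1)) + 1) + 1 := by
        intro k
        induction k with
        | zero => simpa using HL
        | succ k ih =>
          have hc : ((k+1 : ℕ) : Fin (m+1)) = (k : Fin (m+1)) + 1 := by push_cast; ring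
          rw [hc]
          rcases P ((k : Fin (m+1)) + 1) with h | h
          · exfalso
            rw [← ih] at h
            have h3 := τ.injective h
            exact absurd (keyc 2 0 (by omega) (by omega)
              (by push_cast; linear_combination h3)) (by omega)
          · exact h
      have s0 : τ 0 = τ 1 + 1 := by simpa using step' 0
      have s1 : τ 1 = τ 2 + 1 := by
        have h := step' 1
        rw [Nat.cast_one, show (1 : Fin (m+1)) + 1 = 2 by norm_num] at h
        exact h
      have s2 : τ 2 = τ 3 + 1 := by
        have h := step' 2
        rw [Nat.cast_ofNat, show (2 : Fin (m+1)) + 1 = 3 by norm_num] at h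
        exact h
      have eb0 : τ 0 = τ 3 + 3 := by linear_combination s0 + s1 + s2
      have eb1 : τ 1 = τ 3 + 2 := by linear_combination s1 + s2
      have hgood3 : goodF (tInd (0 : Fin (m+1)) ∘ ⇑σ) := (hGood _).mpr (Or.inr ⟨0, rfl⟩)
      rcases hgood3 with ⟨d, hd⟩ | ⟨d, hd⟩
      · have hiff : ∀ i, (σ i = 0 ∨ σ i = 1 ∨ σ i = 3) ↔ (i = d ∨ i = d + 1) := by
          intro i
          have := congrFun hd i
          simp only [pInd, tInd, Function.comp_apply] at this
          have h2 := decide_eq_decide.mp this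
          simpa only [zero_add] using h2
        have m0 : τ 0 = d ∨ τ 0 = d + 1 := (hiff (τ 0)).mp (Or.inl (happ 0))
        have m1 : τ 1 = d ∨ τ 1 = d + 1 := (hiff (τ 1)).mp (Or.inr (Or.inl (happ 1)))
        have m3 : τ 3 = d ∨ τ 3 = d + 1 := (hiff (τ 3)).mp (Or.inr (Or.inr (happ 3)))
        rcases m0 with h0 | h0 <;> rcases m1 with h1 | h1 <;> rcases m3 with h3 | h3 <;>
          first
            | exact absurd (keyc 1 0 (by omega) (by omega)
                (by push_cast; linear_combination h0 - h1 - eb0 + eb1)) (by omega)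
            | exact absurd (keyc 3 0 (by omega) (by omega)
                (by push_cast; linear_combination h0 - h3 - eb0)) (by omega)
            | exact absurd (keyc 2 0 (by omega) (by omega)
                (by push_cast; linear_combination h1 - h3 - eb1)) (by omega)
      · have hiff' : ∀ i : Fin (m+1), (i = τ 0 ∨ i = τ 1 ∨ i = τ 3) ↔
            (i = d ∨ i = d + 1 ∨ i = d + 3) := by
          intro i
          have := congrFun hd i
          simp only [tInd, Function.comp_apply] at this
          have h2 := decide_eq_decide.mp this
          simp only [zero_add] at h2
          rw [hsig i 0, hsig i 1, hsig i 3] at h2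
          exact h2
        have md : d = τ 0 ∨ d = τ 1 ∨ d = τ 3 := (hiff' d).mpr (Or.inl rfl)
        have md1 : d + 1 = τ 0 ∨ d + 1 = τ 1 ∨ d + 1 = τ 3 :=
          (hiff' (d+1)).mpr (Or.inr (Or.inl rfl))
        have md3 : d + 3 = τ 0 ∨ d + 3 = τ 1 ∨ d + 3 = τ 3 :=
          (hiff' (d+3)).mpr (Or.inr (Or.inr rfl))
        rw [eb0, eb1] at md md1 md3
        rcases md with h | h | h <;> rcases md1 with h1 | h1 | h1 <;>
            rcases md3 with h3 | h3 | h3 <;>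
          first
            | exact absurd (keyc 4 3 (by omega) (by omega)
                (by push_cast; linear_combination h1 - h)) (by omega)
            | exact absurd (keyc 4 2 (by omega) (by omega)
                (by push_cast; linear_combination h1 - h)) (by omega)
            | exact absurd (keyc 4 0 (by omega) (by omega)
                (by push_cast; linear_combination h1 - h)) (by omega)
            | exact absurd (keyc 3 2 (by omega) (by omega)
                (by push_cast; linear_combination h1 - h)) (by omega)
            | exact absurd (keyc 3 0 (by omega) (by omega)
                (by push_cast; linear_combination h1 - h)) (by omega)
            | exact absurd (keyc 1 3 (by omega) (by omega)
                (by push_cast; linear_combination h1 - h)) (by omega)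
            | exact absurd (keyc 1 2 (by omega) (by omega)
                (by push_cast; linear_combination h1 - h)) (by omega)
            | exact absurd (keyc 1 0 (by omega) (by omega)
                (by push_cast; linear_combination h1 - h)) (by omega)
            | exact absurd (keyc 5 3 (by omega) (by omega)
                (by push_cast; linear_combination h3 - h)) (by omega)
            | exact absurd (keyc 5 2 (by omega) (by omega)
                (by push_cast; linear_combination h3 - h)) (by omega)
            | exact absurd (keyc 5 0 (by omega) (by omega)
                (by push_cast; linear_combination h3 - h)) (by omega)

theorem cyclic_representable_small (n : ℕ) (h012 : n = 0 ∨ n = 1 ∨ n = 2) :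
    Representable 2 (Cgroup n) := by
  refine ⟨fun _ => 0, ?_⟩
  have hall : ∀ σ : Equiv.Perm (Fin n), σ ∈ Cgroup n := by
    rcases h012 with rfl | rfl | rfl
    · intro σ
      have hσ : σ = 1 := Equiv.ext fun i => i.elim0
      rw [hσ]; exact one_mem _
    · intro σ
      have hσ : σ = 1 := Equiv.ext fun i => Subsingleton.elim _ _
      rw [hσ]; exact one_mem _
    · intro σ
      have h2 : ∀ i : Fin 2, i = 0 ∨ i = 1 := by decide
      rcases h2 (σ 0) with h0 | h0
      · have h1 : σ 1 = 1 := by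
          rcases h2 (σ 1) with h | h
          · exact absurd (σ.injective (h.trans h0.symm)) (by decide)
          · exact h
        have hσ : σ = 1 := Equiv.ext fun i => by
          rcases h2 i with rfl | rfl <;> simp [h0, h1]
        rw [hσ]; exact one_mem _
      · have h1 : σ 1 = 0 := by
          rcases h2 (σ 1) with h | h
          · exact h
          · exact absurd (σ.injective (h.trans h0.symm)) (by decide)
        have hσ : σ = finRotate 2 := Equiv.ext fun i => by
          rcases h2 i with rfl | rfl
          · rw [h0]; decide
          · rw [h1]; decide
        rw [hσ]; exact Subgroup.mem_zpowers _
  ext σ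
  constructor
  · intro _
    show ∀ x : Fin n → Bool, (fun _ => (0 : Fin 2)) (x ∘ ⇑σ) = (fun _ => (0 : Fin 2)) x
    intro x; rfl
  · intro _; exact hall σ

end CycRep

theorem cyclic_representable (n : ℕ) (hn : n ∉ ({3, 4, 5} : Set ℕ)) :
    Representable 2 (Cgroup n) := by
  simp only [Set.mem_insert_iff, Set.mem_singleton_iff, not_or] at hn
  obtain ⟨h3, h4, h5⟩ := hn
  by_cases h6 : 6 ≤ n
  · obtain ⟨m, rfl⟩ : ∃ m, n = m + 1 := ⟨n - 1, by omega⟩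
    exact CycRep.main m (by omega)
  · exact CycRep.cyclic_representable_small n (by omega)
end

section
/- Let k ≥ 2, let α and β be finite types each with at least 2 elements, and let G ≤ Equiv.Perm α and H ≤ Equiv.Perm β be k-representable subgroups. Then for every r with r² ≥ k, the direct sum G ⊕ H, a subgroup of Equiv.Perm (α ⊕ β), is r-representable. -/
def bwt {γ : Type*} [Fintype γ] (u : γ → Bool) : ℕ :=
  (Finset.univ.filter fun c => u c = true).card

lemma bwt_comp_perm {γ : Type*} [Fintype γ] (u : γ → Bool) (σ : Equiv.Perm γ) :
    bwt (u ∘ ⇑σ) = bwt u := by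
  unfold bwt
  rw [← Fintype.card_subtype, ← Fintype.card_subtype]
  exact Fintype.card_congr (σ.subtypeEquiv fun a => Iff.rfl)

lemma bwt_false {γ : Type*} [Fintype γ] : bwt (fun _ : γ => false) = 0 := by
  unfold bwt; simp

lemma bwt_true {γ : Type*} [Fintype γ] : bwt (fun _ : γ => true) = Fintype.card γ := by
  unfold bwt; simp

lemma bwt_single {γ : Type*} [Fintype γ] [DecidableEq γ] (c₀ : γ) :
    bwt (fun c => if c = c₀ then true else false) = 1 := by
  unfold bwt
  have h : (Finset.univ.filter fun c => (if c = c₀ then true else false) = true) = {c₀} := by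
    ext c; simp
  rw [h, Finset.card_singleton]

lemma bwt_pair {γ : Type*} [Fintype γ] [DecidableEq γ] {c₁ c₂ : γ} (h : c₁ ≠ c₂) :
    bwt (fun c => if c = c₁ ∨ c = c₂ then true else false) = 2 := by
  unfold bwt
  have h2 : (Finset.univ.filter fun c => (if c = c₁ ∨ c = c₂ then true else false) = true)
      = {c₁, c₂} := by ext c; simp
  rw [h2, Finset.card_pair h]

lemma bwt_le {γ : Type*} [Fintype γ] (u : γ → Bool) : bwt u ≤ Fintype.card γ := by
  unfold bwt; rw [← Finset.card_univ]; exact Finset.card_filter_le _ _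

lemma bwt_eq_zero {γ : Type*} [Fintype γ] {u : γ → Bool} (h : bwt u = 0) :
    ∀ c, u c = false := by
  intro c
  cases hcu : u c with
  | false => rfl
  | true =>
    exfalso
    have hm : c ∈ Finset.univ.filter fun c => u c = true := by simp [hcu]
    rw [Finset.card_eq_zero.mp h] at hm
    simp at hm

lemma bwt_eq_card {γ : Type*} [Fintype γ] {u : γ → Bool} (h : bwt u = Fintype.card γ) :
    ∀ c, u c = true := by
  intro c
  have h2 := Finset.eq_univ_of_card _ h
  have hm : c ∈ Finset.univ.filter fun c => u c = true := by
    rw [h2]; exact Finset.mem_univ c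
  simpa using hm

def dg1 (r : ℕ) (hr : 0 < r) {k : ℕ} (i : Fin k) : Fin r := ⟨i.val / r % r, Nat.mod_lt _ hr⟩
def dg2 (r : ℕ) (hr : 0 < r) {k : ℕ} (i : Fin k) : Fin r := ⟨i.val % r, Nat.mod_lt _ hr⟩

lemma dg_inj {r k : ℕ} (hr : 0 < r) (hk : k ≤ r * r) {i j : Fin k}
    (h1 : dg1 r hr i = dg1 r hr j) (h2 : dg2 r hr i = dg2 r hr j) : i = j := by
  have hi : i.val / r < r := (Nat.div_lt_iff_lt_mul hr).mpr (lt_of_lt_of_le i.isLt hk)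
  have hj : j.val / r < r := (Nat.div_lt_iff_lt_mul hr).mpr (lt_of_lt_of_le j.isLt hk)
  have e1 : i.val / r = j.val / r := by
    have := congrArg Fin.val h1
    simpa [dg1, Nat.mod_eq_of_lt hi, Nat.mod_eq_of_lt hj] using this
  have e2 : i.val % r = j.val % r := congrArg Fin.val h2
  apply Fin.ext
  calc i.val = r * (i.val / r) + i.val % r := (Nat.div_add_mod _ _).symm
    _ = r * (j.val / r) + j.val % r := by rw [e1, e2]
    _ = j.val := Nat.div_add_mod _ _

def FFval (r : ℕ) (hr : 0 < r) {k : ℕ} (fu gv : Fin k) (n m a b : ℕ) : Fin r :=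
  if a = 2 ∧ b = 0 then ⟨1 % r, Nat.mod_lt 1 hr⟩
  else if a = 1 ∧ b = 1 then ⟨0, hr⟩
  else if a = 0 ∧ b = 2 then ⟨0, hr⟩
  else if b = 0 ∧ 0 < a ∧ a < n then dg1 r hr fu
  else if b = m ∧ 0 < a ∧ a < n then dg2 r hr fu
  else if a = 0 ∧ 0 < b ∧ b < m then dg1 r hr gv
  else if a = n ∧ 0 < b ∧ b < m then dg2 r hr gv
  else if a = 2 ∧ b = 1 then dg1 r hr fu
  else if a = 1 ∧ b = 2 then dg1 r hr gv
  else ⟨0, hr⟩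

section FFlemmas
variable {r : ℕ} (hr : 0 < r) {k : ℕ} {fu gv : Fin k} {n m : ℕ}

lemma FF20 : FFval r hr fu gv n m 2 0 = ⟨1 % r, Nat.mod_lt 1 hr⟩ := by
  unfold FFval; rw [if_pos (by omega)]

lemma FF11 : FFval r hr fu gv n m 1 1 = ⟨0, hr⟩ := by
  unfold FFval
  rw [if_neg (by omega), if_pos (by omega)]

lemma FF02 : FFval r hr fu gv n m 0 2 = ⟨0, hr⟩ := by
  unfold FFval
  rw [if_neg (by omega), if_neg (by omega), if_pos (by omega)]

lemma FFf1 {a : ℕ} (h0 : 0 < a) (h1 : a < n) (ha2 : a ≠ 2) :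
    FFval r hr fu gv n m a 0 = dg1 r hr fu := by
  unfold FFval
  rw [if_neg (by omega), if_neg (by omega), if_neg (by omega), if_pos (by omega)]

lemma FFf1' (hn : 2 < n) (hm : 2 ≤ m) :
    FFval r hr fu gv n m 2 1 = dg1 r hr fu := by
  unfold FFval
  rw [if_neg (by omega), if_neg (by omega), if_neg (by omega), if_neg (by omega),
    if_neg (by omega), if_neg (by omega), if_neg (by omega), if_pos (by omega)]

lemma FFf2 {a : ℕ} (h0 : 0 < a) (h1 : a < n) (hm : 2 ≤ m) :
    FFval r hr fu gv n m a m = dg2 r hr fu := by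
  unfold FFval
  rw [if_neg (by omega), if_neg (by omega), if_neg (by omega), if_neg (by omega),
    if_pos (by omega)]

lemma FFg1 {b : ℕ} (h0 : 0 < b) (h1 : b < m) (hb2 : b ≠ 2) (hn : 2 ≤ n) :
    FFval r hr fu gv n m 0 b = dg1 r hr gv := by
  unfold FFval
  rw [if_neg (by omega), if_neg (by omega), if_neg (by omega), if_neg (by omega),
    if_neg (by omega), if_pos (by omega)]

lemma FFg1' (hm : 2 < m) (hn : 2 ≤ n) :
    FFval r hr fu gv n m 1 2 = dg1 r hr gv := by
  unfold FFval
  rw [if_neg (by omega), if_neg (by omega), if_neg (by omega), if_neg (by omega),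
    if_neg (by omega), if_neg (by omega), if_neg (by omega), if_neg (by omega),
    if_pos (by omega)]

lemma FFg2 {b : ℕ} (h0 : 0 < b) (h1 : b < m) (hn : 2 ≤ n) :
    FFval r hr fu gv n m n b = dg2 r hr gv := by
  unfold FFval
  rw [if_neg (by omega), if_neg (by omega), if_neg (by omega), if_neg (by omega),
    if_neg (by omega), if_neg (by omega), if_pos (by omega)]

end FFlemmas

lemma mem_symmGroup {α V : Type*} {f : (α → Bool) → V} {σ : Equiv.Perm α} :
    σ ∈ symmGroup f ↔ ∀ x : α → Bool, f (x ∘ σ) = f x := Iff.rfl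

theorem directSum_representable
    {α β : Type*} [Fintype α] [Fintype β] (k : ℕ) (hk : 2 ≤ k)
    (hα : 2 ≤ Fintype.card α) (hβ : 2 ≤ Fintype.card β)
    (G : Subgroup (Equiv.Perm α)) (H : Subgroup (Equiv.Perm β))
    (hG : Representable k G) (hH : Representable k H)
    (r : ℕ) (hr : k ≤ r ^ 2) :
    Representable r (directSum G H) := by
  classical
  obtain ⟨f, rfl⟩ := hG
  obtain ⟨g, rfl⟩ := hH
  have hrr : k ≤ r * r := by rw [pow_two] at hr; exact hr
  have h2r : 2 ≤ r := by
    rcases Nat.lt_or_ge r 2 with h | h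
    · interval_cases r <;> omega
    · exact h
  have hr0 : 0 < r := by omega
  have h1m : 1 % r = 1 := Nat.mod_eq_of_lt (by omega)
  refine ⟨fun x => FFval r hr0 (f (x ∘ Sum.inl)) (g (x ∘ Sum.inr))
      (Fintype.card α) (Fintype.card β) (bwt (x ∘ Sum.inl)) (bwt (x ∘ Sum.inr)), ?_⟩
  ext π
  constructor
  · -- direct sum ⊆ symmetry group
    intro hπ
    rw [mem_symmGroup]
    obtain ⟨⟨σ, τ⟩, hst, rfl⟩ := Subgroup.mem_map.mp hπ
    obtain ⟨hσ, hτ⟩ := Subgroup.mem_prod.mp hst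
    intro x
    have e1 : (x ∘ ⇑(Equiv.Perm.sumCongrHom α β (σ, τ))) ∘ Sum.inl = (x ∘ Sum.inl) ∘ ⇑σ := by
      funext a; simp [Equiv.Perm.sumCongrHom]
    have e2 : (x ∘ ⇑(Equiv.Perm.sumCongrHom α β (σ, τ))) ∘ Sum.inr = (x ∘ Sum.inr) ∘ ⇑τ := by
      funext b; simp [Equiv.Perm.sumCongrHom]
    rw [e1, e2, bwt_comp_perm, bwt_comp_perm, mem_symmGroup.mp hσ, mem_symmGroup.mp hτ]
  · -- symmetry group ⊆ direct sum
    intro hmem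
    have hπ : ∀ x : (α ⊕ β) → Bool,
        FFval r hr0 (f ((x ∘ ⇑π) ∘ Sum.inl)) (g ((x ∘ ⇑π) ∘ Sum.inr))
          (Fintype.card α) (Fintype.card β)
          (bwt ((x ∘ ⇑π) ∘ Sum.inl)) (bwt ((x ∘ ⇑π) ∘ Sum.inr)) =
        FFval r hr0 (f (x ∘ Sum.inl)) (g (x ∘ Sum.inr))
          (Fintype.card α) (Fintype.card β)
          (bwt (x ∘ Sum.inl)) (bwt (x ∘ Sum.inr)) := hmem
    -- Step A: π maps the left summand onto itself
    have hA : ∀ a : α, ∃ c, π (Sum.inl a) = Sum.inl c := by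
      intro a
      obtain ⟨a', ha'⟩ := Fintype.exists_ne_of_one_lt_card (by omega) a
      cases hcase : π (Sum.inl a) with
      | inl c => exact ⟨c, rfl⟩
      | inr d =>
        exfalso
        have hx := hπ (fun z => if z = π (Sum.inl a) ∨ z = π (Sum.inl a') then true else false)
        have hcomp : ((fun z => if z = π (Sum.inl a) ∨ z = π (Sum.inl a') then true else false)
            ∘ ⇑π) = fun z => if z = Sum.inl a ∨ z = Sum.inl a' then true else false := by
          funext z
          simp only [Function.comp_apply, Equiv.apply_eq_iff_eq]
        rw [hcomp] at hx
        have l1 : ((fun z : α ⊕ β => if z = Sum.inl a ∨ z = Sum.inl a' then true else false)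
            ∘ Sum.inl) = fun c => if c = a ∨ c = a' then true else false := by
          funext c; simp
        have l2 : ((fun z : α ⊕ β => if z = Sum.inl a ∨ z = Sum.inl a' then true else false)
            ∘ Sum.inr) = fun _ : β => false := by
          funext b; simp
        rw [l1, l2, bwt_pair (Ne.symm ha'), bwt_false, FF20] at hx
        cases hcase' : π (Sum.inl a') with
        | inl c' =>
          have r1 : ((fun z => if z = π (Sum.inl a) ∨ z = π (Sum.inl a') then true else false)
              ∘ Sum.inl) = fun c : α => if c = c' then true else false := by
            funext c; simp [hcase, hcase']
          have r2 : ((fun z => if z = π (Sum.inl a) ∨ z = π (Sum.inl a') then true else false)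
              ∘ Sum.inr) = fun b : β => if b = d then true else false := by
            funext b; simp [hcase, hcase']
          rw [r1, r2, bwt_single, bwt_single, FF11] at hx
          have hv : 1 % r = 0 := congrArg Fin.val hx
          rw [h1m] at hv
          exact one_ne_zero hv
        | inr d' =>
          have hdd : d ≠ d' := by
            intro h
            have : π (Sum.inl a) = π (Sum.inl a') := by rw [hcase, hcase', h]
            exact ha' (Sum.inl.inj (π.injective this)).symm
          have r1 : ((fun z => if z = π (Sum.inl a) ∨ z = π (Sum.inl a') then true else false)
              ∘ Sum.inl) = fun _ : α => false := by
            funext c; simp [hcase, hcase']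
          have r2 : ((fun z => if z = π (Sum.inl a) ∨ z = π (Sum.inl a') then true else false)
              ∘ Sum.inr) = fun b : β => if b = d ∨ b = d' then true else false := by
            funext b; simp [hcase, hcase']
          rw [r1, r2, bwt_false, bwt_pair hdd, FF02] at hx
          have hv : 1 % r = 0 := congrArg Fin.val hx
          rw [h1m] at hv
          exact one_ne_zero hv
    choose σ0 hσ0 using hA
    have hσinj : Function.Injective σ0 := by
      intro a b hab
      have h : π (Sum.inl a) = π (Sum.inl b) := by rw [hσ0 a, hσ0 b, hab]
      exact Sum.inl.inj (π.injective h)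
    have hσsurj : Function.Surjective σ0 := Finite.injective_iff_surjective.mp hσinj
    have hB : ∀ b : β, ∃ d, π (Sum.inr b) = Sum.inr d := by
      intro b
      cases hc : π (Sum.inr b) with
      | inr d => exact ⟨d, rfl⟩
      | inl c =>
        obtain ⟨a, ha⟩ := hσsurj c
        have h : π (Sum.inl a) = π (Sum.inr b) := by rw [hσ0 a, ha, hc]
        exact absurd (π.injective h) (by simp)
    choose τ0 hτ0 using hB
    have hτinj : Function.Injective τ0 := by
      intro a b hab
      have h : π (Sum.inr a) = π (Sum.inr b) := by rw [hτ0 a, hτ0 b, hab]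
      exact Sum.inr.inj (π.injective h)
    have hτsurj : Function.Surjective τ0 := Finite.injective_iff_surjective.mp hτinj
    let σ : Equiv.Perm α := Equiv.ofBijective σ0 ⟨hσinj, hσsurj⟩
    let τ : Equiv.Perm β := Equiv.ofBijective τ0 ⟨hτinj, hτsurj⟩
    -- Step C: the induced permutations preserve f and g
    have hfread : ∀ u : α → Bool, f (u ∘ ⇑σ) = f u := by
      intro u
      rcases Nat.eq_zero_or_pos (bwt u) with h0 | hpos
      · have hu := bwt_eq_zero h0
        have he : u ∘ ⇑σ = u := by
          funext c; show u (σ c) = u c; rw [hu (σ c), hu c]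
        rw [he]
      rcases eq_or_lt_of_le (bwt_le u) with htop | hlt
      · have hu := bwt_eq_card htop
        have he : u ∘ ⇑σ = u := by
          funext c; show u (σ c) = u c; rw [hu (σ c), hu c]
        rw [he]
      · have hd2 : dg2 r hr0 (f (u ∘ ⇑σ)) = dg2 r hr0 (f u) := by
          have hx := hπ (Sum.elim u (fun _ => true))
          have c1 : ((Sum.elim u (fun _ => true) : α ⊕ β → Bool) ∘ ⇑π) ∘ Sum.inl
              = u ∘ ⇑σ := by
            funext a2
            show Sum.elim u (fun _ => true) (π (Sum.inl a2)) = u (σ a2)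
            rw [hσ0 a2]; rfl
          have c2 : ((Sum.elim u (fun _ => true) : α ⊕ β → Bool) ∘ ⇑π) ∘ Sum.inr
              = (fun _ : β => true) := by
            funext b2
            show Sum.elim u (fun _ => true) (π (Sum.inr b2)) = true
            rw [hτ0 b2]; rfl
          rw [c1, c2, Sum.elim_comp_inl, Sum.elim_comp_inr, bwt_comp_perm, bwt_true] at hx
          rw [FFf2 hr0 hpos hlt hβ, FFf2 hr0 hpos hlt hβ] at hx
          exact hx
        have hd1 : dg1 r hr0 (f (u ∘ ⇑σ)) = dg1 r hr0 (f u) := by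
          by_cases ha2 : bwt u = 2
          · obtain ⟨b0⟩ : Nonempty β := Fintype.card_pos_iff.mp (by omega)
            have hx := hπ (Sum.elim u (fun b => if b = b0 then true else false))
            have c1 : ((Sum.elim u (fun b => if b = b0 then true else false) : α ⊕ β → Bool)
                ∘ ⇑π) ∘ Sum.inl = u ∘ ⇑σ := by
              funext a2
              show Sum.elim u _ (π (Sum.inl a2)) = u (σ a2)
              rw [hσ0 a2]; rfl
            have c2 : ((Sum.elim u (fun b => if b = b0 then true else false) : α ⊕ β → Bool)
                ∘ ⇑π) ∘ Sum.inr = (fun b => if b = b0 then true else false) ∘ ⇑τ := by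
              funext b2
              show Sum.elim u _ (π (Sum.inr b2)) = _
              rw [hτ0 b2]; rfl
            rw [c1, c2, Sum.elim_comp_inl, Sum.elim_comp_inr, bwt_comp_perm, bwt_comp_perm,
              bwt_single, ha2] at hx
            rw [FFf1' hr0 (by omega) hβ, FFf1' hr0 (by omega) hβ] at hx
            exact hx
          · have hx := hπ (Sum.elim u (fun _ => false))
            have c1 : ((Sum.elim u (fun _ => false) : α ⊕ β → Bool) ∘ ⇑π) ∘ Sum.inl
                = u ∘ ⇑σ := by
              funext a2
              show Sum.elim u (fun _ => false) (π (Sum.inl a2)) = u (σ a2)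
              rw [hσ0 a2]; rfl
            have c2 : ((Sum.elim u (fun _ => false) : α ⊕ β → Bool) ∘ ⇑π) ∘ Sum.inr
                = (fun _ : β => false) := by
              funext b2
              show Sum.elim u (fun _ => false) (π (Sum.inr b2)) = false
              rw [hτ0 b2]; rfl
            rw [c1, c2, Sum.elim_comp_inl, Sum.elim_comp_inr, bwt_comp_perm, bwt_false] at hx
            rw [FFf1 hr0 hpos hlt ha2, FFf1 hr0 hpos hlt ha2] at hx
            exact hx
        exact dg_inj hr0 hrr hd1 hd2
    have hgread : ∀ v : β → Bool, g (v ∘ ⇑τ) = g v := by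
      intro v
      rcases Nat.eq_zero_or_pos (bwt v) with h0 | hpos
      · have hv := bwt_eq_zero h0
        have he : v ∘ ⇑τ = v := by
          funext c; show v (τ c) = v c; rw [hv (τ c), hv c]
        rw [he]
      rcases eq_or_lt_of_le (bwt_le v) with htop | hlt
      · have hv := bwt_eq_card htop
        have he : v ∘ ⇑τ = v := by
          funext c; show v (τ c) = v c; rw [hv (τ c), hv c]
        rw [he]
      · have hd2 : dg2 r hr0 (g (v ∘ ⇑τ)) = dg2 r hr0 (g v) := by
          have hx := hπ (Sum.elim (fun _ => true) v)
          have c1 : ((Sum.elim (fun _ => true) v : α ⊕ β → Bool) ∘ ⇑π) ∘ Sum.inl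
              = (fun _ : α => true) := by
            funext a2
            show Sum.elim (fun _ => true) v (π (Sum.inl a2)) = true
            rw [hσ0 a2]; rfl
          have c2 : ((Sum.elim (fun _ => true) v : α ⊕ β → Bool) ∘ ⇑π) ∘ Sum.inr
              = v ∘ ⇑τ := by
            funext b2
            show Sum.elim (fun _ => true) v (π (Sum.inr b2)) = v (τ b2)
            rw [hτ0 b2]; rfl
          rw [c1, c2, Sum.elim_comp_inl, Sum.elim_comp_inr, bwt_comp_perm, bwt_true] at hx
          rw [FFg2 hr0 hpos hlt hα, FFg2 hr0 hpos hlt hα] at hx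
          exact hx
        have hd1 : dg1 r hr0 (g (v ∘ ⇑τ)) = dg1 r hr0 (g v) := by
          by_cases hb2 : bwt v = 2
          · obtain ⟨a0⟩ : Nonempty α := Fintype.card_pos_iff.mp (by omega)
            have hx := hπ (Sum.elim (fun a => if a = a0 then true else false) v)
            have c1 : ((Sum.elim (fun a => if a = a0 then true else false) v : α ⊕ β → Bool)
                ∘ ⇑π) ∘ Sum.inl = (fun a => if a = a0 then true else false) ∘ ⇑σ := by
              funext a2
              show Sum.elim _ v (π (Sum.inl a2)) = _
              rw [hσ0 a2]; rfl
            have c2 : ((Sum.elim (fun a => if a = a0 then true else false) v : α ⊕ β → Bool)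
                ∘ ⇑π) ∘ Sum.inr = v ∘ ⇑τ := by
              funext b2
              show Sum.elim _ v (π (Sum.inr b2)) = v (τ b2)
              rw [hτ0 b2]; rfl
            rw [c1, c2, Sum.elim_comp_inl, Sum.elim_comp_inr, bwt_comp_perm, bwt_comp_perm,
              bwt_single, hb2] at hx
            rw [FFg1' hr0 (by omega) hα, FFg1' hr0 (by omega) hα] at hx
            exact hx
          · have hx := hπ (Sum.elim (fun _ => false) v)
            have c1 : ((Sum.elim (fun _ => false) v : α ⊕ β → Bool) ∘ ⇑π) ∘ Sum.inl
                = (fun _ : α => false) := by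
              funext a2
              show Sum.elim (fun _ => false) v (π (Sum.inl a2)) = false
              rw [hσ0 a2]; rfl
            have c2 : ((Sum.elim (fun _ => false) v : α ⊕ β → Bool) ∘ ⇑π) ∘ Sum.inr
                = v ∘ ⇑τ := by
              funext b2
              show Sum.elim (fun _ => false) v (π (Sum.inr b2)) = v (τ b2)
              rw [hτ0 b2]; rfl
            rw [c1, c2, Sum.elim_comp_inl, Sum.elim_comp_inr, bwt_comp_perm, bwt_false] at hx
            rw [FFg1 hr0 hpos hlt hb2 hα, FFg1 hr0 hpos hlt hb2 hα] at hx
            exact hx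
        exact dg_inj hr0 hrr hd1 hd2
    refine Subgroup.mem_map.mpr ⟨(σ, τ), Subgroup.mem_prod.mpr
      ⟨mem_symmGroup.mpr hfread, mem_symmGroup.mpr hgread⟩, ?_⟩
    apply Equiv.ext
    intro z
    cases z with
    | inl a =>
      show (Equiv.sumCongr σ τ) (Sum.inl a) = π (Sum.inl a)
      rw [hσ0 a]
      rfl
    | inr b =>
      show (Equiv.sumCongr σ τ) (Sum.inr b) = π (Sum.inr b)
      rw [hτ0 b]
      rfl
end

section
/- Let α be a finite type, k ≥ 2, let G ≤ H be subgroups of Equiv.Perm α, and suppose H = G(f) for some k-valued boolean function f on α. Suppose there is a subset S of α that is regular in H and such that f x = f x_S for every x : α → Bool whose number of true coordinates equals the cardinality of S, where x_S : α → Bool is the characteristic function of S. Then G is k-representable. -/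
theorem representable_of_regular_set
    {α : Type*} [Fintype α] [DecidableEq α] (k : ℕ) (hk : 2 ≤ k)
    (G H : Subgroup (Equiv.Perm α)) (hGH : G ≤ H)
    (f : (α → Bool) → Fin k) (hH : H = symmGroup f)
    (S : Finset α) (hreg : IsRegularSet (↑S) H)
    (hf : ∀ x : α → Bool,
      (Finset.univ.filter fun a => x a = true).card = S.card →
      f x = f (fun a => decide (a ∈ S))) :
    Representable k G := by
  classical
  -- weight is invariant under permutations
  have wcard : ∀ (σ : Equiv.Perm α) (x : α → Bool),
      (Finset.univ.filter fun a => (x ∘ ⇑σ) a = true).card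
        = (Finset.univ.filter fun a => x a = true).card := by
    intro σ x
    apply Finset.card_bij' (fun a _ => σ a) (fun a _ => σ⁻¹ a)
    · intro a ha
      simp only [Finset.mem_filter, Finset.mem_univ, true_and, Function.comp] at ha ⊢
      exact ha
    · intro a ha
      simp only [Finset.mem_filter, Finset.mem_univ, true_and, Function.comp] at ha ⊢
      simpa using ha
    · intro a _; simp
    · intro a _; simp
  have hHmem : ∀ σ, σ ∈ H ↔ ∀ x : α → Bool, f (x ∘ ⇑σ) = f x := by
    intro σ; rw [hH]; rfl
  -- the G-orbit of the characteristic function of S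
  set orb : (α → Bool) → Prop :=
    fun x => ∃ τ ∈ G, x = fun a => decide (τ a ∈ S) with horb
  have horbw : ∀ x, orb x →
      (Finset.univ.filter fun a => x a = true).card = S.card := by
    rintro x ⟨τ, hτ, rfl⟩
    apply Finset.card_bij' (fun a _ => τ a) (fun a _ => τ⁻¹ a)
    · intro a ha
      simp only [Finset.mem_filter, Finset.mem_univ, true_and, decide_eq_true_eq] at ha
      exact ha
    · intro a ha
      simp only [Finset.mem_filter, Finset.mem_univ, true_and, decide_eq_true_eq]
      simpa using ha
    · intro a _; simp
    · intro a _; simp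
  have hzw : ((⟨0, by omega⟩ : Fin k) : Fin k) ≠ ⟨1, by omega⟩ := by
    intro h
    have := congrArg Fin.val h
    simp at this
  set g : (α → Bool) → Fin k := fun x =>
    if orb x then ⟨0, by omega⟩
    else if (Finset.univ.filter fun a => x a = true).card = S.card then ⟨1, by omega⟩
    else f x with hg
  refine ⟨g, le_antisymm ?_ ?_⟩
  · -- G ≤ symmGroup g
    intro σ hσ x
    have hw := wcard σ x
    have horbiff : orb (x ∘ ⇑σ) ↔ orb x := by
      constructor
      · rintro ⟨τ, hτ, hx⟩
        refine ⟨τ * σ⁻¹, mul_mem hτ (inv_mem hσ), ?_⟩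
        funext a
        have := congrFun hx (σ⁻¹ a)
        simp [Function.comp] at this ⊢
        rw [this]; congr
      · rintro ⟨τ, hτ, rfl⟩
        exact ⟨τ * σ, mul_mem hτ hσ, by funext a; simp [Function.comp]; congr⟩
    have hfx : f (x ∘ ⇑σ) = f x := (hHmem σ).mp (hGH hσ) x
    simp only [hg]
    by_cases h1 : orb x
    · rw [if_pos (horbiff.mpr h1), if_pos h1]
    · rw [if_neg (fun h => h1 (horbiff.mp h)), if_neg h1, hw]
      by_cases h2 : (Finset.univ.filter fun a => x a = true).card = S.card
      · rw [if_pos h2, if_pos h2]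
      · rw [if_neg h2, if_neg h2, hfx]
  · -- symmGroup g ≤ G
    intro σ hσ
    -- first, σ ∈ H
    have hσH : σ ∈ H := by
      rw [hHmem]
      intro x
      have hw := wcard σ x
      by_cases h2 : (Finset.univ.filter fun a => x a = true).card = S.card
      · rw [hf x h2, hf (x ∘ ⇑σ) (hw.trans h2)]
      · have hx1 : ¬ orb x := fun h => h2 (horbw x h)
        have hx2 : ¬ orb (x ∘ ⇑σ) := fun h => h2 (hw ▸ horbw _ h)
        have := hσ x
        simp only [hg, if_neg hx1, if_neg hx2, if_neg h2, if_neg (hw.symm ▸ h2 : ¬ _)] at this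
        exact this
    -- now use the regular set
    set x : α → Bool := (fun a => decide (a ∈ S)) ∘ ⇑σ⁻¹ with hxdef
    have hxσ : x ∘ ⇑σ = fun a => decide (a ∈ S) := by
      funext a; simp [hxdef, Function.comp]
    have horbS : orb (fun a => decide (a ∈ S)) :=
      ⟨1, one_mem G, by funext a; simp; congr⟩
    have hgx : g x = ⟨0, by omega⟩ := by
      have := hσ x
      rw [hxσ] at this
      rw [← this]
      simp only [hg]
      rw [if_pos horbS]
    have hxw : (Finset.univ.filter fun a => x a = true).card = S.card := by
      have h3 : (Finset.univ.filter fun a => (x ∘ ⇑σ) a = true) = S := by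
        rw [hxσ]; ext a; simp
      rw [← wcard σ x, h3]
    have horbx : orb x := by
      by_contra hc
      rw [hg] at hgx
      simp only [if_neg hc, if_pos hxw] at hgx
      exact hzw hgx.symm
    obtain ⟨τ, hτ, hxτ⟩ := horbx
    -- x a = decide (σ⁻¹ a ∈ S); so σ⁻¹ a ∈ S ↔ τ a ∈ S for all a
    have key : ∀ a : α, σ⁻¹ a ∈ S ↔ τ a ∈ S := by
      intro a
      have := congrFun hxτ a
      simp only [hxdef, Function.comp] at this
      constructor
      · intro h; have := this ▸ (decide_eq_true h); exact of_decide_eq_true this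
      · intro h
        have h' : decide (τ a ∈ S) = true := decide_eq_true h
        rw [← this] at h'
        exact of_decide_eq_true h'
    have hmem : τ * σ ∈ H := mul_mem (hGH hτ) hσH
    have himg : ⇑(τ * σ) '' ↑S = ↑S := by
      apply Set.eq_of_subset_of_ncard_le
      · rintro _ ⟨a, ha, rfl⟩
        have : σ⁻¹ (σ a) ∈ S := by simpa using ha
        have := (key (σ a)).mp this
        simpa using this
      · rw [Set.ncard_image_of_injective _ (τ * σ).injective]
      · exact S.finite_toSet
    have h1 : τ * σ = 1 := hreg (τ * σ) hmem himg
    have hστ : σ = τ⁻¹ := eq_inv_of_mul_eq_one_right h1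
    rw [hστ]
    exact inv_mem hτ
end

section
/- Let α be a finite type and let H be a subgroup of Equiv.Perm α that is a direct sum of regular groups. If S is a subset of α containing exactly one element of each orbit of the action of H on α, then S is regular in H. -/
theorem selector_regular_in_directSumOfRegular
    {α : Type*} [Fintype α] (H : Subgroup (Equiv.Perm α))
    (hH : IsDirectSumOfRegular H) (S : Set α)
    (hS : ∀ a : α, ∃! s : α, s ∈ S ∧ ∃ σ ∈ H, σ a = s) :
    IsRegularSet S H := by
  obtain ⟨ι, _, β, _, e, G, hreg, hmem⟩ := hH
  intro π hπ hπS
  obtain ⟨g, hg, hπe⟩ := (hmem π).1 hπ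
  ext a
  obtain ⟨s, ⟨hsS, σ, hσ, hσa⟩, huniq⟩ := hS a
  obtain ⟨g', hg', hσe⟩ := (hmem σ).1 hσ
  have hπs : π s = s := by
    refine huniq (π s) ⟨?_, π * σ, H.mul_mem hπ hσ, by simp [hσa]⟩
    rw [← hπS]; exact ⟨s, hsS, rfl⟩
  have hs1 : (e s).1 = (e a).1 := by rw [← hσa, hσe a]
  have hfix : g (e s).1 (e s).2 = (e s).2 := by
    have h1 : e (π s) = ⟨(e s).1, g (e s).1 (e s).2⟩ := hπe s
    rw [hπs] at h1
    exact (eq_of_heq (Sigma.ext_iff.1 h1).2).symm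
  have hg1 : g (e s).1 = 1 := (hreg (e s).1).2 _ (hg _) _ hfix
  have hg1' : g (e a).1 = 1 := hs1 ▸ hg1
  have hea : e (π a) = e a := by
    rw [hπe a, hg1']
    simp
  simpa using e.injective hea
end

section
/- Let i ∈ {3,4,5}, let β be a finite type, and let H be a regular subgroup of Equiv.Perm β. Let M be a normal subgroup of C_i, N a normal subgroup of H, φ : C_i ⧸ M ≃* H ⧸ N a group isomorphism, and let G = C_i/M ⊕_φ H/N be the corresponding nontrivial subdirect sum (a subgroup of Equiv.Perm (Fin i ⊕ β), nontrivial meaning M ≠ C_i). If H is 2-representable, then G is 2-representable. -/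
namespace SDSAux
noncomputable section
open Classical
open Fin.NatCast Fin.CommRing

lemma perm_apply_inv_self {α : Type*} (f : Equiv.Perm α) (x : α) : f (f⁻¹ x) = x :=
  f.apply_symm_apply x

lemma perm_inv_apply_self {α : Type*} (f : Equiv.Perm α) (x : α) : f⁻¹ (f x) = x :=
  f.symm_apply_apply x

abbrev CoreProp (n : ℕ) : Prop :=
  ∀ P : Fin (n+3) → Bool, P 0 = true →
    (∀ a b : Fin (n+3), P a = true → P b = true → P (a + b) = true) →
    P 1 = false →
    ∀ σ : Equiv.Perm (Fin (n+3)), ∀ s : Fin (n+3),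
      (∀ j, P (σ j - j - s) = true) →
      (∀ j, ∃ e : Fin (n+3), ((σ j = e ∧ σ (j+1) = e+1) ∨ (σ j = e+1 ∧ σ (j+1) = e)) ∧ P (e - j - s) = true) →
      ∃ s' : Fin (n+3), (∀ j, σ j = j + s') ∧ P (s' - s) = true

set_option maxRecDepth 1000000 in
lemma core3 : CoreProp 0 := by decide
set_option maxRecDepth 1000000 in
lemma core4 : CoreProp 1 := by decide
set_option maxRecDepth 1000000 in
lemma core5 : CoreProp 2 := by decide

def rhoP (n : ℕ) : Equiv.Perm (Fin (n+3)) := finRotate (n+3)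

def rhoC (n : ℕ) : ↥(Cgroup (n+3)) := ⟨rhoP n, Subgroup.mem_zpowers _⟩

lemma rhoP_pow_apply (n k : ℕ) (j : Fin (n+3)) : (rhoP n ^ k) j = j + (k : Fin (n+3)) := by
  induction k with
  | zero => simp
  | succ k ih =>
    rw [pow_succ', Equiv.Perm.mul_apply, ih]
    show finRotate (n+2+1) _ = _
    rw [finRotate_succ_apply]
    push_cast
    ring

lemma rhoP_npow (n : ℕ) : rhoP n ^ (n+3) = 1 := by
  ext j
  rw [rhoP_pow_apply]
  simp [Fin.natCast_self]

lemma rhoC_coe_pow (n k : ℕ) : ((rhoC n ^ k : ↥(Cgroup (n+3))) : Equiv.Perm (Fin (n+3))) = rhoP n ^ k := by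
  simp [rhoC]

lemma rhoC_npow (n : ℕ) : rhoC n ^ (n+3) = 1 := by
  apply Subtype.ext
  rw [rhoC_coe_pow, rhoP_npow]; rfl

lemma rhoC_pow_mod (n x : ℕ) : rhoC n ^ (x % (n+3)) = rhoC n ^ x := by
  conv_rhs => rw [← Nat.div_add_mod x (n+3)]
  rw [pow_add, pow_mul, rhoC_npow, one_pow, one_mul]

lemma rhoC_pow_add_val (n : ℕ) (a b : Fin (n+3)) :
    rhoC n ^ ((a + b : Fin (n+3)) : ℕ) = rhoC n ^ (a : ℕ) * rhoC n ^ (b : ℕ) := by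
  rw [Fin.val_add, rhoC_pow_mod, pow_add]

lemma exists_fin_rho (n : ℕ) (σ : ↥(Cgroup (n+3))) : ∃ s : Fin (n+3), σ = rhoC n ^ (s : ℕ) := by
  obtain ⟨g, hg⟩ := σ
  rw [Cgroup, Subgroup.mem_zpowers_iff] at hg
  obtain ⟨k, hk⟩ := hg
  have h1 : finRotate (n+3) ^ ((k % (n+3) : ℤ).toNat : ℤ) = g := by
    rw [Int.toNat_of_nonneg (Int.emod_nonneg k (by positivity))]
    conv_rhs => rw [← hk]
    conv_rhs => rw [← Int.mul_ediv_add_emod k (n+3)]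
    rw [zpow_add, zpow_mul]
    norm_cast
    rw [show finRotate (n+3) = rhoP n from rfl, rhoP_npow]
    simp
  refine ⟨⟨(k % (n+3) : ℤ).toNat, ?_⟩, ?_⟩
  · have := Int.emod_lt_of_pos k (show (0:ℤ) < (n+3) by positivity)
    omega
  · apply Subtype.ext
    rw [rhoC_coe_pow]
    rw [zpow_natCast] at h1
    exact h1.symm

lemma cgroup_eq_top (n : ℕ) (M : Subgroup (Cgroup (n+3))) (h : rhoC n ∈ M) : M = ⊤ := by
  rw [Subgroup.eq_top_iff']
  intro x
  obtain ⟨s, rfl⟩ := exists_fin_rho n x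
  exact pow_mem h _

variable {n : ℕ} {β : Type*} {A : Type*}

def Cond1 (z : Fin (n+3) ⊕ β → Bool) : Prop := ∀ j, z (Sum.inl j) = true
def Cond2 (z : Fin (n+3) ⊕ β → Bool) : Prop :=
  ∃ j, (∀ j', z (Sum.inl j') = true ↔ j' = j) ∧ ∀ b, z (Sum.inr b) = false
def Cond3 (mm : Fin (n+3) → A) (L : β → A) (z : Fin (n+3) ⊕ β → Bool) : Prop :=
  ∃ j b, (∀ j', z (Sum.inl j') = true ↔ j' = j) ∧
    (∀ b', z (Sum.inr b') = true ↔ b' = b) ∧ mm j = L b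
def Cond4 (mm : Fin (n+3) → A) (L : β → A) (z : Fin (n+3) ⊕ β → Bool) : Prop :=
  ∃ j b, (∀ j', z (Sum.inl j') = true ↔ (j' = j ∨ j' = j + 1)) ∧
    (∀ b', z (Sum.inr b') = true ↔ b' = b) ∧ mm j = L b
def DD (fH : (β → Bool) → Fin 2) (mm : Fin (n+3) → A) (L : β → A)
    (z : Fin (n+3) ⊕ β → Bool) : Prop :=
  (Cond1 z ∧ fH (fun b => z (Sum.inr b)) = 1) ∨ Cond2 z ∨ Cond3 mm L z ∨ Cond4 mm L z
def FF (fH : (β → Bool) → Fin 2) (mm : Fin (n+3) → A) (L : β → A)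
    (z : Fin (n+3) ⊕ β → Bool) : Fin 2 :=
  if Cond1 z then fH (fun b => z (Sum.inr b))
  else if Cond2 z ∨ Cond3 mm L z ∨ Cond4 mm L z then 1 else 0

lemma DD_comp [Group A] (fH : (β → Bool) → Fin 2) (mm : Fin (n+3) → A) (L : β → A)
    (c : A) (σ : Equiv.Perm (Fin (n+3))) (τ : Equiv.Perm β) (s : Fin (n+3))
    (hσ : ∀ j, σ j = j + s)
    (hτ : ∀ x : β → Bool, fH (x ∘ ⇑τ) = fH x)
    (hmm : ∀ j, mm (j + s) = c * mm j)
    (hL : ∀ b, L (τ b) = c * L b)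
    (z : Fin (n+3) ⊕ β → Bool) (h : DD fH mm L z) :
    DD fH mm L (fun a => z (Equiv.sumCongr σ τ a)) := by
  have hzl : ∀ j, z (Equiv.sumCongr σ τ (Sum.inl j)) = z (Sum.inl (j + s)) := by
    intro j; rw [Equiv.sumCongr_apply, Sum.map_inl, hσ]
  have hzr : ∀ b, z (Equiv.sumCongr σ τ (Sum.inr b)) = z (Sum.inr (τ b)) := by
    intro b; rw [Equiv.sumCongr_apply, Sum.map_inr]
  have hmm' : ∀ j, mm (j - s) = c⁻¹ * mm j := by
    intro j
    have := hmm (j - s)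
    rw [sub_add_cancel] at this
    rw [this]; group
  have hL' : ∀ b, L (τ⁻¹ b) = c⁻¹ * L b := by
    intro b
    have := hL (τ⁻¹ b)
    rw [perm_apply_inv_self] at this
    rw [this]; group
  rcases h with ⟨h1, h2⟩ | ⟨j, hx, hy⟩ | ⟨j, b, hx, hy, hl⟩ | ⟨j, b, hx, hy, hl⟩
  · refine Or.inl ⟨fun j => by beta_reduce; rw [hzl]; exact h1 (j + s), ?_⟩
    have : (fun b => z (Equiv.sumCongr σ τ (Sum.inr b))) = (fun b => z (Sum.inr b)) ∘ ⇑τ := by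
      funext b; rw [hzr]; rfl
    rw [this, hτ]; exact h2
  · refine Or.inr (Or.inl ⟨j - s, fun j' => ?_, fun b => by beta_reduce; rw [hzr]; exact hy (τ b)⟩)
    beta_reduce; rw [hzl, hx (j' + s)]
    constructor
    · intro h'; rw [← h']; ring
    · intro h'; rw [h']; ring_nf
  · refine Or.inr (Or.inr (Or.inl ⟨j - s, τ⁻¹ b, fun j' => ?_, fun b' => ?_, ?_⟩))
    · beta_reduce; rw [hzl, hx (j' + s)]
      constructor
      · intro h'; rw [← h']; ring
      · intro h'; rw [h']; ring_nf
    · beta_reduce; rw [hzr, hy (τ b')]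
      constructor
      · intro h'; rw [← h']; simp
      · intro h'; rw [h']; simp
    · rw [hmm' j, hL' b, hl]
  · refine Or.inr (Or.inr (Or.inr ⟨j - s, τ⁻¹ b, fun j' => ?_, fun b' => ?_, ?_⟩))
    · beta_reduce; rw [hzl, hx (j' + s)]
      constructor
      · rintro (h' | h')
        · left; rw [← h']; ring
        · right
          have h2 : j' = j + 1 - s := by rw [← h']; ring
          rw [h2]; ring
      · rintro (h' | h')
        · left; rw [h']; ring_nf
        · right; rw [h']; ring
    · beta_reduce; rw [hzr, hy (τ b')]
      constructor
      · intro h'; rw [← h']; simp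
      · intro h'; rw [h']; simp
    · rw [hmm' j, hL' b, hl]

lemma fin_one_ne_zero' (n : ℕ) : (1 : Fin (n+3)) ≠ 0 := by
  intro h
  have := congrArg Fin.val h
  rw [Fin.val_one, Fin.val_zero] at this
  omega

lemma fin_oneone_ne_zero (n : ℕ) : (1 : Fin (n+3)) + 1 ≠ 0 := by
  intro h
  have := congrArg Fin.val h
  rw [Fin.val_add, Fin.val_one, Fin.val_zero, Nat.mod_eq_of_lt (by omega)] at this
  omega

lemma fin_add_one_ne' (n : ℕ) (j : Fin (n+3)) : j + 1 ≠ j := by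
  intro h
  have : j + 1 = j + 0 := by rw [h]; simp
  exact fin_one_ne_zero' n (add_left_cancel this)

lemma fin_add_oneone_ne (n : ℕ) (j : Fin (n+3)) : j + 1 + 1 ≠ j := by
  intro h
  have : j + (1 + 1) = j + 0 := by rw [← add_assoc, h]; simp
  exact fin_oneone_ne_zero n (add_left_cancel this)

lemma cond2_not_cond1 {z : Fin (n+3) ⊕ β → Bool} (h : Cond2 z) : ¬ Cond1 z := by
  obtain ⟨j, hx, _⟩ := h
  intro h1
  exact fin_add_one_ne' n j ((hx (j+1)).mp (h1 (j+1)))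

lemma cond3_not_cond1 {mm : Fin (n+3) → A} {L : β → A} {z : Fin (n+3) ⊕ β → Bool}
    (h : Cond3 mm L z) : ¬ Cond1 z := by
  obtain ⟨j, b, hx, _, _⟩ := h
  intro h1
  exact fin_add_one_ne' n j ((hx (j+1)).mp (h1 (j+1)))

lemma cond4_not_cond1 {mm : Fin (n+3) → A} {L : β → A} {z : Fin (n+3) ⊕ β → Bool}
    (h : Cond4 mm L z) : ¬ Cond1 z := by
  obtain ⟨j, b, hx, _, _⟩ := h
  intro h1
  rcases (hx (j+1+1)).mp (h1 (j+1+1)) with hc | hc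
  · exact fin_add_oneone_ne n j hc
  · exact fin_add_one_ne' n (j+1) hc

lemma ff_eq_one_iff (fH : (β → Bool) → Fin 2) (mm : Fin (n+3) → A) (L : β → A)
    (z : Fin (n+3) ⊕ β → Bool) : FF fH mm L z = 1 ↔ DD fH mm L z := by
  unfold FF DD
  by_cases h1 : Cond1 z
  · rw [if_pos h1]
    constructor
    · intro h; exact Or.inl ⟨h1, h⟩
    · rintro (⟨_, h⟩ | h | h | h)
      · exact h
      · exact absurd h1 (cond2_not_cond1 h)
      · exact absurd h1 (cond3_not_cond1 h)
      · exact absurd h1 (cond4_not_cond1 h)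
  · rw [if_neg h1]
    by_cases h2 : Cond2 z ∨ Cond3 mm L z ∨ Cond4 mm L z
    · rw [if_pos h2]
      constructor
      · intro _
        rcases h2 with h | h | h
        · exact Or.inr (Or.inl h)
        · exact Or.inr (Or.inr (Or.inl h))
        · exact Or.inr (Or.inr (Or.inr h))
      · intro _; rfl
    · rw [if_neg h2]
      constructor
      · intro h; exact absurd h (by decide)
      · rintro (⟨hc, _⟩ | h | h | h)
        · exact absurd hc h1
        · exact absurd (Or.inl h) h2
        · exact absurd (Or.inr (Or.inl h)) h2
        · exact absurd (Or.inr (Or.inr h)) h2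

lemma ff_values (fH : (β → Bool) → Fin 2) (mm : Fin (n+3) → A) (L : β → A)
    (z : Fin (n+3) ⊕ β → Bool) : FF fH mm L z = 0 ∨ FF fH mm L z = 1 := by
  have h : ∀ v : Fin 2, v = 0 ∨ v = 1 := by decide
  exact h _

lemma FF_comp [Group A] (fH : (β → Bool) → Fin 2) (mm : Fin (n+3) → A) (L : β → A)
    (c : A) (σ : Equiv.Perm (Fin (n+3))) (τ : Equiv.Perm β) (s : Fin (n+3))
    (hσ : ∀ j, σ j = j + s)
    (hτ : ∀ x : β → Bool, fH (x ∘ ⇑τ) = fH x)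
    (hmm : ∀ j, mm (j + s) = c * mm j)
    (hL : ∀ b, L (τ b) = c * L b)
    (z : Fin (n+3) ⊕ β → Bool) :
    FF fH mm L (fun a => z (Equiv.sumCongr σ τ a)) = FF fH mm L z := by
  have hσinv : ∀ j, σ⁻¹ j = j + (-s) := by
    intro j
    apply σ.injective
    rw [perm_apply_inv_self, hσ, ← sub_eq_add_neg, sub_add_cancel]
  have hτinv : ∀ x : β → Bool, fH (x ∘ ⇑τ⁻¹) = fH x := by
    intro x
    have h1 := hτ (x ∘ ⇑τ⁻¹)
    have h2 : (x ∘ ⇑τ⁻¹) ∘ ⇑τ = x := by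
      funext b; simp [Function.comp, perm_inv_apply_self]
    rw [h2] at h1; exact h1.symm
  have hmminv : ∀ j, mm (j + (-s)) = c⁻¹ * mm j := by
    intro j
    have h1 := hmm (j - s)
    rw [sub_add_cancel] at h1
    rw [← sub_eq_add_neg, h1]; group
  have hLinv : ∀ b, L (τ⁻¹ b) = c⁻¹ * L b := by
    intro b
    have h1 := hL (τ⁻¹ b)
    rw [perm_apply_inv_self] at h1
    rw [h1]; group
  have hcomp : (fun a => (fun a' => z (Equiv.sumCongr σ τ a')) (Equiv.sumCongr σ⁻¹ τ⁻¹ a)) = z := by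
    funext a
    cases a with
    | inl j => simp
    | inr b => simp
  rcases ff_values fH mm L z with h0 | h1
  · rcases ff_values fH mm L (fun a => z (Equiv.sumCongr σ τ a)) with h0' | h1'
    · rw [h0, h0']
    · exfalso
      have hD := (ff_eq_one_iff fH mm L _).mp h1'
      have hD2 := DD_comp fH mm L c⁻¹ σ⁻¹ τ⁻¹ (-s) hσinv hτinv hmminv hLinv _ hD
      rw [hcomp] at hD2
      have := (ff_eq_one_iff fH mm L z).mpr hD2
      rw [h0] at this
      exact absurd this (by decide)
  · have hD := (ff_eq_one_iff fH mm L z).mp h1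
    have hD2 := DD_comp fH mm L c σ τ s hσ hτ hmm hL z hD
    rw [h1, (ff_eq_one_iff fH mm L _).mpr hD2]

lemma mem_symmGroup {α V : Type*} (f : (α → Bool) → V) (σ : Equiv.Perm α) :
    σ ∈ symmGroup f ↔ ∀ x : α → Bool, f (x ∘ σ) = f x := Iff.rfl

end
end SDSAux
namespace SDSAux
noncomputable section
open Classical
open Fin.NatCast Fin.CommRing

theorem aux_main (n : ℕ) (hcore : CoreProp n) {β : Type*} [Fintype β]
    (H : Subgroup (Equiv.Perm β)) (hreg : IsRegularPermGroup H)
    (M : Subgroup (Cgroup (n+3))) [M.Normal] (N : Subgroup H) [N.Normal]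
    (φ : ↥(Cgroup (n+3)) ⧸ M ≃* ↥H ⧸ N) (hM : M ≠ ⊤)
    (hH : Representable 2 H) :
    Representable 2 (subdirectSum (Cgroup (n+3)) H M N φ) := by
  classical
  obtain ⟨fH, hfH⟩ := hH
  -- β is nonempty
  have hβ : Nonempty β := by
    by_contra hne
    rw [not_nonempty_iff] at hne
    have hsub : ∀ x y : ↥H ⧸ N, x = y := by
      intro x y
      obtain ⟨u, rfl⟩ := QuotientGroup.mk_surjective x
      obtain ⟨v, rfl⟩ := QuotientGroup.mk_surjective y
      congr 1
      apply Subtype.ext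
      exact Equiv.ext fun b => (hne.false b).elim
    have h1 : (QuotientGroup.mk (rhoC n) : _ ⧸ M) = (1 : _ ⧸ M) :=
      φ.injective (hsub _ _)
    exact hM (cgroup_eq_top n M ((QuotientGroup.eq_one_iff _).mp h1))
  obtain ⟨b₀⟩ := hβ
  -- labelling of β
  choose gg hgH hgapp using hreg.1
  have huv : ∀ u v : Equiv.Perm β, u ∈ H → v ∈ H → u b₀ = v b₀ → u = v := by
    intro u v hu hv h
    have h1 : (v⁻¹ * u) b₀ = b₀ := by
      rw [Equiv.Perm.mul_apply, h, perm_inv_apply_self]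
    have h2 := hreg.2 (v⁻¹ * u) (mul_mem (inv_mem hv) hu) b₀ h1
    have := inv_mul_eq_one.mp h2
    exact this.symm
  set L : β → ↥H ⧸ N := fun b => QuotientGroup.mk ⟨gg b₀ b, hgH b₀ b⟩ with hLdef
  have hLeq : ∀ (τ : ↥H) (b : β), L ((τ : Equiv.Perm β) b) = QuotientGroup.mk τ * L b := by
    intro τ b
    have h1 : gg b₀ ((τ : Equiv.Perm β) b) = (τ : Equiv.Perm β) * gg b₀ b := by
      apply huv _ _ (hgH _ _) (mul_mem τ.2 (hgH _ _))
      rw [hgapp, Equiv.Perm.mul_apply, hgapp]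
    have h2 : (⟨gg b₀ ((τ : Equiv.Perm β) b), hgH _ _⟩ : ↥H) = τ * ⟨gg b₀ b, hgH _ _⟩ :=
      Subtype.ext h1
    show QuotientGroup.mk _ = _
    rw [h2, QuotientGroup.mk_mul]
  have hL1 : L b₀ = 1 := by
    have h1 : gg b₀ b₀ = 1 := by
      apply huv _ _ (hgH _ _) (one_mem H)
      rw [hgapp, Equiv.Perm.one_apply]
    have h2 : (⟨gg b₀ b₀, hgH _ _⟩ : ↥H) = 1 := Subtype.ext h1
    show QuotientGroup.mk _ = _
    rw [h2, QuotientGroup.mk_one]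
  have hLsurj : ∀ c : ↥H ⧸ N, ∃ b, L b = c := by
    intro c
    obtain ⟨τ, rfl⟩ := QuotientGroup.mk_surjective c
    exact ⟨(τ : Equiv.Perm β) b₀, by rw [hLeq τ b₀, hL1, mul_one]⟩
  -- labelling of Fin (n+3)
  set mm : Fin (n+3) → ↥H ⧸ N := fun j => φ (QuotientGroup.mk (rhoC n ^ (j : ℕ))) with hmmdef
  have hmmadd : ∀ (s j : Fin (n+3)),
      mm (j + s) = φ (QuotientGroup.mk (rhoC n ^ (s : ℕ))) * mm j := by
    intro s j
    show φ (QuotientGroup.mk (rhoC n ^ ((j + s : Fin (n+3)) : ℕ))) = _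
    rw [show j + s = s + j from add_comm j s, rhoC_pow_add_val, QuotientGroup.mk_mul, map_mul]
  -- the subgroup indicator
  set P : Fin (n+3) → Bool := fun d => decide (rhoC n ^ (d : ℕ) ∈ M) with hPdef
  have hPiff : ∀ d, P d = true ↔ rhoC n ^ (d : ℕ) ∈ M := by
    intro d; simp [hPdef]
  have hP0 : P 0 = true := by
    rw [hPiff]
    simp only [Fin.val_zero, pow_zero]
    exact one_mem M
  have hPadd : ∀ a b : Fin (n+3), P a = true → P b = true → P (a + b) = true := by
    intro a b ha hb
    rw [hPiff] at ha hb ⊢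
    rw [rhoC_pow_add_val]
    exact mul_mem ha hb
  have hP1 : P 1 = false := by
    by_contra h
    rw [Bool.not_eq_false, hPiff, Fin.val_one, pow_one] at h
    exact hM (cgroup_eq_top n M h)
  -- bridge from quotient equalities to P
  have hbridge : ∀ (j₀ j s : Fin (n+3)),
      mm j₀ = φ (QuotientGroup.mk (rhoC n ^ (s : ℕ))) * mm j → P (j₀ - j - s) = true := by
    intro j₀ j s h
    rw [← hmmadd] at h
    have h2 : (QuotientGroup.mk (rhoC n ^ ((j₀ : Fin (n+3)) : ℕ)) : _ ⧸ M) =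
        QuotientGroup.mk (rhoC n ^ ((j + s : Fin (n+3)) : ℕ)) := φ.injective h
    have h3 := (QuotientGroup.eq (s := M)).mp h2.symm
    have hd : rhoC n ^ ((j + s : Fin (n+3)) : ℕ) * rhoC n ^ ((j₀ - j - s : Fin (n+3)) : ℕ)
        = rhoC n ^ ((j₀ : Fin (n+3)) : ℕ) := by
      rw [← rhoC_pow_add_val]
      congr 1
      ring
    rw [hPiff]
    have h4 : rhoC n ^ ((j₀ - j - s : Fin (n+3)) : ℕ)
        = (rhoC n ^ ((j + s : Fin (n+3)) : ℕ))⁻¹ * rhoC n ^ ((j₀ : Fin (n+3)) : ℕ) := by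
      rw [← hd]; group
    rw [h4]
    exact h3
  -- the boolean function
  refine ⟨FF fH mm L, ?_⟩
  ext π
  rw [mem_symmGroup]
  constructor
  · -- subdirect sum ⊆ symmetry group
    rintro ⟨σ, τ, hlink, rfl⟩ z
    obtain ⟨s, hs⟩ := exists_fin_rho n σ
    have hσap : ∀ j, (σ : Equiv.Perm (Fin (n+3))) j = j + s := by
      intro j
      rw [hs, rhoC_coe_pow, rhoP_pow_apply, Fin.cast_val_eq_self]
    have hτsym : ∀ x : β → Bool, fH (x ∘ (τ : Equiv.Perm β)) = fH x := by
      have h1 : (τ : Equiv.Perm β) ∈ symmGroup fH := by rw [← hfH]; exact τ.2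
      exact h1
    have hc : φ (QuotientGroup.mk (rhoC n ^ (s : ℕ))) = QuotientGroup.mk τ := by
      rw [← hs]; exact hlink
    have hmmc : ∀ j, mm (j + s) = QuotientGroup.mk τ * mm j := by
      intro j; rw [hmmadd, hc]
    have hLc : ∀ b, L ((τ : Equiv.Perm β) b) = QuotientGroup.mk τ * L b := hLeq τ
    have heq : z ∘ ⇑(Equiv.Perm.sumCongrHom (Fin (n+3)) β ((σ : Equiv.Perm (Fin (n+3))), (τ : Equiv.Perm β)))
        = fun a => z (Equiv.sumCongr (σ : Equiv.Perm (Fin (n+3))) (τ : Equiv.Perm β) a) := rfl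
    rw [heq]
    exact FF_comp fH mm L (QuotientGroup.mk τ) _ _ s hσap hτsym hmmc hLc z
  · -- symmetry group ⊆ subdirect sum
    intro hz
    have hDD : ∀ z : Fin (n+3) ⊕ β → Bool,
        DD fH mm L (fun a => z (π a)) ↔ DD fH mm L z := by
      intro z
      rw [← ff_eq_one_iff, ← ff_eq_one_iff]
      have : (fun a => z (π a)) = z ∘ ⇑π := rfl
      rw [this, hz z]
    -- block preservation
    have stepA : ∀ j, ∃ j', π⁻¹ (Sum.inl j) = Sum.inl j' := by
      intro j
      have base : DD fH mm L (fun a => decide (a = Sum.inl j)) := by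
        refine Or.inr (Or.inl ⟨j, ?_, ?_⟩) <;> simp
      have hz1 : DD fH mm L (fun a => decide (π a = Sum.inl j)) :=
        (hDD (fun a => decide (a = Sum.inl j))).mpr base
      rcases hz1 with ⟨h1, _⟩ | ⟨j0, hx, hy⟩ | ⟨j0, b0, hx, hy, _⟩ | ⟨j0, b0, hx, hy, _⟩
      · exfalso
        have e0 : π (Sum.inl 0) = Sum.inl j := of_decide_eq_true (h1 0)
        have e1 : π (Sum.inl 1) = Sum.inl j := of_decide_eq_true (h1 1)
        have : (Sum.inl 0 : Fin (n+3) ⊕ β) = Sum.inl 1 := π.injective (e0.trans e1.symm)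
        exact fin_one_ne_zero' n (Sum.inl.inj this).symm
      · have e0 : π (Sum.inl j0) = Sum.inl j := of_decide_eq_true ((hx j0).mpr rfl)
        exact ⟨j0, by rw [← e0, perm_inv_apply_self]⟩
      · have e0 : π (Sum.inl j0) = Sum.inl j := of_decide_eq_true ((hx j0).mpr rfl)
        exact ⟨j0, by rw [← e0, perm_inv_apply_self]⟩
      · have e0 : π (Sum.inl j0) = Sum.inl j := of_decide_eq_true ((hx j0).mpr (Or.inl rfl))
        exact ⟨j0, by rw [← e0, perm_inv_apply_self]⟩
    set g : Fin (n+3) → Fin (n+3) := fun j => Classical.choose (stepA j) with hgdef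
    have hgch : ∀ j, π (Sum.inl (g j)) = Sum.inl j := by
      intro j
      have h1 := Classical.choose_spec (stepA j)
      rw [← h1, perm_apply_inv_self]
    have ginj : Function.Injective g := by
      intro a b hab
      have : (Sum.inl a : Fin (n+3) ⊕ β) = Sum.inl b := by
        rw [← hgch a, ← hgch b, hab]
      exact Sum.inl.inj this
    have gsurj : Function.Surjective g := Finite.injective_iff_surjective.mp ginj
    set σplus : Equiv.Perm (Fin (n+3)) := (Equiv.ofBijective g ⟨ginj, gsurj⟩).symm with hσdef
    have hσplus : ∀ j, π (Sum.inl j) = Sum.inl (σplus j) := by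
      intro j
      have h1 : g (σplus j) = j := (Equiv.ofBijective g ⟨ginj, gsurj⟩).apply_symm_apply j
      calc π (Sum.inl j) = π (Sum.inl (g (σplus j))) := by rw [h1]
        _ = Sum.inl (σplus j) := hgch (σplus j)
    have stepA' : ∀ b, ∃ b', π (Sum.inr b) = Sum.inr b' := by
      intro b
      rcases h : π (Sum.inr b) with j | b'
      · exfalso
        have h1 := Classical.choose_spec (stepA j)
        have h2 : π⁻¹ (Sum.inl j) = Sum.inr b := by
          rw [← h, perm_inv_apply_self]
        exact nomatch (h2.symm.trans h1)
      · exact ⟨b', rfl⟩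
    set t : β → β := fun b => Classical.choose (stepA' b) with htdef
    have htch : ∀ b, π (Sum.inr b) = Sum.inr (t b) := fun b => Classical.choose_spec (stepA' b)
    have tinj : Function.Injective t := by
      intro a b hab
      have : (Sum.inr a : Fin (n+3) ⊕ β) = Sum.inr b :=
        π.injective (by rw [htch a, htch b, hab])
      exact Sum.inr.inj this
    have tsurj : Function.Surjective t := Finite.injective_iff_surjective.mp tinj
    set τplus : Equiv.Perm β := Equiv.ofBijective t ⟨tinj, tsurj⟩ with hτdef
    have hτplus : ∀ b, π (Sum.inr b) = Sum.inr (τplus b) := htch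
    -- τplus is in H
    have hτH : τplus ∈ H := by
      rw [hfH, mem_symmGroup]
      intro B
      have hzB := hz (Sum.elim (fun _ => true) B)
      have hc0 : Cond1 (β := β) (n := n) (Sum.elim (fun _ => true) B) := fun j => rfl
      have e1 : FF fH mm L (Sum.elim (fun _ => true) B) = fH B := by
        unfold FF
        rw [if_pos hc0]
        rfl
      have hc1 : Cond1 (β := β) ((Sum.elim (fun _ => true) B) ∘ ⇑π) := by
        intro j
        show Sum.elim (fun _ => true) B (π (Sum.inl j)) = true
        rw [hσplus j]
        rfl
      have e2 : FF fH mm L ((Sum.elim (fun _ => true) B) ∘ ⇑π) = fH (B ∘ ⇑τplus) := by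
        unfold FF
        rw [if_pos hc1]
        congr 1
        funext b
        show Sum.elim (fun _ => true) B (π (Sum.inr b)) = B (τplus b)
        rw [hτplus b]
        rfl
      rw [e1, e2] at hzB
      exact hzB
    set τel : ↥H := ⟨τplus, hτH⟩ with hτeldef
    obtain ⟨σ0, hσ0⟩ := QuotientGroup.mk_surjective (φ.symm (QuotientGroup.mk τel))
    obtain ⟨s, rfl⟩ := exists_fin_rho n σ0
    have hlink2 : φ (QuotientGroup.mk (rhoC n ^ (s : ℕ))) = QuotientGroup.mk τel := by
      rw [hσ0]; exact φ.apply_symm_apply _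
    have hLc : ∀ b, L (τplus b) = φ (QuotientGroup.mk (rhoC n ^ (s : ℕ))) * L b := by
      intro b
      rw [hlink2]
      exact hLeq τel b
    -- point condition
    have hpoint : ∀ j, P (σplus j - j - s) = true := by
      intro j
      obtain ⟨b, hb⟩ := hLsurj (mm j)
      set z : Fin (n+3) ⊕ β → Bool :=
        fun a => decide (a = Sum.inl (σplus j) ∨ a = Sum.inr (τplus b)) with hzdef
      have hzπ : (fun a => z (π a)) = fun a => decide (a = Sum.inl j ∨ a = Sum.inr b) := by
        funext a
        show decide (π a = Sum.inl (σplus j) ∨ π a = Sum.inr (τplus b)) = _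
        apply decide_eq_decide.mpr
        constructor
        · rintro (h' | h')
          · left; exact π.injective (by rw [h', hσplus])
          · right; exact π.injective (by rw [h', hτplus])
        · rintro (h' | h')
          · left; rw [h', hσplus]
          · right; rw [h', hτplus]
      have hD1 : DD fH mm L (fun a => z (π a)) := by
        rw [hzπ]
        refine Or.inr (Or.inr (Or.inl ⟨j, b, ?_, ?_, hb.symm⟩)) <;> · intro x; simp
      have hD2 : DD fH mm L z := (hDD z).mp hD1
      rcases hD2 with ⟨h1, _⟩ | ⟨j0, hx, hy⟩ | ⟨j0, b0, hx, hy, hl⟩ | ⟨j0, b0, hx, hy, hl⟩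
      · exfalso
        have h2 := of_decide_eq_true (h1 (σplus j + 1))
        rcases h2 with h' | h'
        · exact fin_add_one_ne' n (σplus j) (Sum.inl.inj h')
        · exact nomatch h'
      · exfalso
        have h2 := hy (τplus b)
        rw [hzdef] at h2
        simp at h2
      · have h1 : σplus j = j0 := (hx (σplus j)).mp (by rw [hzdef]; simp)
        have h2 : τplus b = b0 := (hy (τplus b)).mp (by rw [hzdef]; simp)
        apply hbridge (σplus j) j s
        rw [h1, hl, ← h2, hLc, hb]
      · exfalso
        have h1 : σplus j = j0 ∨ σplus j = j0 + 1 := (hx (σplus j)).mp (by rw [hzdef]; simp)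
        have h2 : j0 = σplus j := by
          have h3 := (hx j0).mpr (Or.inl rfl)
          rw [hzdef] at h3
          simp only [decide_eq_true_eq] at h3
          rcases h3 with h' | h'
          · exact Sum.inl.inj h'
          · exact nomatch h'
        have h4 : j0 + 1 = σplus j := by
          have h3 := (hx (j0 + 1)).mpr (Or.inr rfl)
          rw [hzdef] at h3
          simp only [decide_eq_true_eq] at h3
          rcases h3 with h' | h'
          · exact Sum.inl.inj h'
          · exact nomatch h'
        exact fin_add_one_ne' n j0 (h4.trans h2.symm)
    -- edge condition
    have hedge : ∀ j, ∃ e : Fin (n+3),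
        ((σplus j = e ∧ σplus (j+1) = e+1) ∨ (σplus j = e+1 ∧ σplus (j+1) = e)) ∧
        P (e - j - s) = true := by
      intro j
      obtain ⟨b, hb⟩ := hLsurj (mm j)
      set z : Fin (n+3) ⊕ β → Bool :=
        fun a => decide (a = Sum.inl (σplus j) ∨ a = Sum.inl (σplus (j+1)) ∨ a = Sum.inr (τplus b)) with hzdef
      have hzπ : (fun a => z (π a)) =
          fun a => decide (a = Sum.inl j ∨ a = Sum.inl (j+1) ∨ a = Sum.inr b) := by
        funext a
        show decide (π a = Sum.inl (σplus j) ∨ π a = Sum.inl (σplus (j+1)) ∨ π a = Sum.inr (τplus b)) = _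
        apply decide_eq_decide.mpr
        constructor
        · rintro (h' | h' | h')
          · left; exact π.injective (by rw [h', hσplus])
          · right; left; exact π.injective (by rw [h', hσplus])
          · right; right; exact π.injective (by rw [h', hτplus])
        · rintro (h' | h' | h')
          · left; rw [h', hσplus]
          · right; left; rw [h', hσplus]
          · right; right; rw [h', hτplus]
      have hD1 : DD fH mm L (fun a => z (π a)) := by
        rw [hzπ]
        refine Or.inr (Or.inr (Or.inr ⟨j, b, ?_, ?_, hb.symm⟩)) <;> · intro x; simp
      have hD2 : DD fH mm L z := (hDD z).mp hD1
      rcases hD2 with ⟨h1, _⟩ | ⟨j0, hx, hy⟩ | ⟨j0, b0, hx, hy, hl⟩ | ⟨j0, b0, hx, hy, hl⟩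
      · exfalso
        have h2 := of_decide_eq_true (h1 (σplus (j + 1 + 1)))
        rcases h2 with h' | h' | h'
        · exact fin_add_oneone_ne n j (σplus.injective (Sum.inl.inj h'))
        · exact fin_add_one_ne' n (j+1) (σplus.injective (Sum.inl.inj h'))
        · exact nomatch h'
      · exfalso
        have h2 := hy (τplus b)
        rw [hzdef] at h2
        simp at h2
      · exfalso
        have h1 : σplus j = j0 := (hx (σplus j)).mp (by rw [hzdef]; simp)
        have h2 : σplus (j+1) = j0 := (hx (σplus (j+1))).mp (by rw [hzdef]; simp)
        exact fin_add_one_ne' n j (σplus.injective (h2.trans h1.symm))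
      · have hb0 : τplus b = b0 := (hy (τplus b)).mp (by rw [hzdef]; simp)
        have h1 : σplus j = j0 ∨ σplus j = j0 + 1 := (hx (σplus j)).mp (by rw [hzdef]; simp)
        have h2 : σplus (j+1) = j0 ∨ σplus (j+1) = j0 + 1 :=
          (hx (σplus (j+1))).mp (by rw [hzdef]; simp)
        have h3 : j0 = σplus j ∨ j0 = σplus (j+1) := by
          have h' := (hx j0).mpr (Or.inl rfl)
          rw [hzdef] at h'
          simp only [decide_eq_true_eq] at h'
          rcases h' with h' | h' | h'
          · exact Or.inl (Sum.inl.inj h')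
          · exact Or.inr (Sum.inl.inj h')
          · exact nomatch h'
        have h4 : j0 + 1 = σplus j ∨ j0 + 1 = σplus (j+1) := by
          have h' := (hx (j0+1)).mpr (Or.inr rfl)
          rw [hzdef] at h'
          simp only [decide_eq_true_eq] at h'
          rcases h' with h' | h' | h'
          · exact Or.inl (Sum.inl.inj h')
          · exact Or.inr (Sum.inl.inj h')
          · exact nomatch h'
        have hPj0 : P (j0 - j - s) = true := by
          apply hbridge j0 j s
          rw [hl, ← hb0, hLc, hb]
        refine ⟨j0, ?_, hPj0⟩
        rcases h3 with h3 | h3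
        · left
          refine ⟨h3.symm, ?_⟩
          rcases h4 with h4 | h4
          · exact absurd (h4.trans h3.symm) (fin_add_one_ne' n j0)
          · exact h4.symm
        · right
          refine ⟨?_, h3.symm⟩
          rcases h4 with h4 | h4
          · exact h4.symm
          · exact absurd (h4.trans h3.symm) (fin_add_one_ne' n j0)
    -- apply the core combinatorial lemma
    obtain ⟨s', hs', hPs'⟩ := hcore P hP0 hPadd hP1 σplus s hpoint hedge
    refine ⟨rhoC n ^ (s' : ℕ), τel, ?_, ?_⟩
    · -- linking condition
      have hsplit : rhoC n ^ ((s' : Fin (n+3)) : ℕ)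
          = rhoC n ^ ((s' - s : Fin (n+3)) : ℕ) * rhoC n ^ ((s : Fin (n+3)) : ℕ) := by
        rw [← rhoC_pow_add_val]
        congr 1
        ring
      have h1 : (QuotientGroup.mk (rhoC n ^ ((s' - s : Fin (n+3)) : ℕ)) : _ ⧸ M) = 1 :=
        (QuotientGroup.eq_one_iff _).mpr ((hPiff _).mp hPs')
      rw [hsplit, QuotientGroup.mk_mul, h1, one_mul, hlink2]
    · -- the permutation equality
      apply Equiv.ext
      intro a
      cases a with
      | inl j =>
        have hr : ((rhoC n ^ (s' : ℕ) : ↥(Cgroup (n+3))) : Equiv.Perm (Fin (n+3))) j = j + s' := by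
          rw [rhoC_coe_pow, rhoP_pow_apply, Fin.cast_val_eq_self]
        show π (Sum.inl j) = Equiv.sumCongr
          ((rhoC n ^ (s' : ℕ) : ↥(Cgroup (n+3))) : Equiv.Perm (Fin (n+3)))
          ((τel : ↥H) : Equiv.Perm β) (Sum.inl j)
        rw [hσplus j, hs' j, Equiv.sumCongr_apply, Sum.map_inl, hr]
      | inr b =>
        show π (Sum.inr b) = Equiv.sumCongr
          ((rhoC n ^ (s' : ℕ) : ↥(Cgroup (n+3))) : Equiv.Perm (Fin (n+3)))
          ((τel : ↥H) : Equiv.Perm β) (Sum.inr b)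
        rw [hτplus b, Equiv.sumCongr_apply, Sum.map_inr]

end
end SDSAux

theorem subdirectSum_cyclic_regular_representable
    (i : ℕ) (hi : i ∈ ({3, 4, 5} : Set ℕ)) {β : Type*} [Fintype β]
    (H : Subgroup (Equiv.Perm β)) (hreg : IsRegularPermGroup H)
    (M : Subgroup (Cgroup i)) [M.Normal] (N : Subgroup H) [N.Normal]
    (φ : ↥(Cgroup i) ⧸ M ≃* ↥H ⧸ N) (hM : M ≠ ⊤)
    (hH : Representable 2 H) :
    Representable 2 (subdirectSum (Cgroup i) H M N φ) := by
  have hi' : i = 3 ∨ i = 4 ∨ i = 5 := by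
    simpa using hi
  rcases hi' with rfl | rfl | rfl
  · exact SDSAux.aux_main 0 SDSAux.core3 H hreg M N φ hM hH
  · exact SDSAux.aux_main 1 SDSAux.core4 H hreg M N φ hM hH
  · exact SDSAux.aux_main 2 SDSAux.core5 H hreg M N φ hM hH
end

section
/- Let β be a finite type with at least 2 elements and let H be a subgroup of Equiv.Perm β such that either H is 2-representable or H is permutation isomorphic to K_4. Suppose the direct sum B = C_2 ⊕ H, a subgroup of Equiv.Perm (Fin 2 ⊕ β), is a direct sum of regular groups. Then every subgroup A of B is 2-representable. -/
-- AUX START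
theorem Equiv.Perm.apply_inv_self {α : Type*} (f : Equiv.Perm α) (x : α) : f (f⁻¹ x) = x :=
  f.apply_symm_apply x

theorem Equiv.Perm.inv_apply_self {α : Type*} (f : Equiv.Perm α) (x : α) : f⁻¹ (f x) = x :=
  f.symm_apply_apply x

lemma fin2_cases (k : Fin 2) : k = 0 ∨ k = 1 := by omega

lemma perm2_cases : ∀ ρ : Equiv.Perm (Fin 2), (ρ 0 = 0 ∧ ρ 1 = 1) ∨ (ρ 0 = 1 ∧ ρ 1 = 0) := by
  decide

lemma mem_Cgroup2 : ∀ σ : Equiv.Perm (Fin 2), σ ∈ Cgroup 2 := by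
  intro σ
  have h : σ = 1 ∨ σ = finRotate 2 := by revert σ; decide
  rcases h with rfl | rfl
  · exact one_mem _
  · exact Subgroup.mem_zpowers _

lemma mem_directSum_iff {α γ : Type*} {G : Subgroup (Equiv.Perm α)} {H : Subgroup (Equiv.Perm γ)}
    {σ : Equiv.Perm α} {τ : Equiv.Perm γ} :
    Equiv.sumCongr σ τ ∈ directSum G H ↔ σ ∈ G ∧ τ ∈ H := by
  constructor
  · rintro h
    obtain ⟨⟨σ', τ'⟩, hm, h3⟩ := Subgroup.mem_map.mp h
    have h4 : Equiv.sumCongr σ' τ' = Equiv.sumCongr σ τ := h3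
    have h5 : (σ', τ') = (σ, τ) := Equiv.Perm.sumCongrHom_injective h4
    obtain ⟨h6, h7⟩ := Prod.mk.injEq .. ▸ h5
    rw [Prod.mk.injEq] at h5
    obtain ⟨hm1, hm2⟩ := Subgroup.mem_prod.mp hm
    exact ⟨h5.1 ▸ hm1, h5.2 ▸ hm2⟩
  · rintro ⟨h1, h2⟩
    exact Subgroup.mem_map.mpr ⟨(σ, τ), Subgroup.mem_prod.mpr ⟨h1, h2⟩, rfl⟩

lemma exists_sumCongr_of_mem {α γ : Type*} {G : Subgroup (Equiv.Perm α)}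
    {H : Subgroup (Equiv.Perm γ)} {π : Equiv.Perm (α ⊕ γ)} (h : π ∈ directSum G H) :
    ∃ σ τ, σ ∈ G ∧ τ ∈ H ∧ π = Equiv.sumCongr σ τ := by
  obtain ⟨⟨σ, τ⟩, hm, h3⟩ := Subgroup.mem_map.mp h
  obtain ⟨hm1, hm2⟩ := Subgroup.mem_prod.mp hm
  exact ⟨σ, τ, hm1, hm2, h3.symm⟩

lemma sumCongr_inv {α γ : Type*} (σ : Equiv.Perm α) (τ : Equiv.Perm γ) :
    (Equiv.sumCongr σ τ)⁻¹ = Equiv.sumCongr σ⁻¹ τ⁻¹ := by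
  apply Equiv.ext
  intro q
  rcases q with k | y
  · have : (Equiv.sumCongr σ τ) (Sum.inl (σ⁻¹ k)) = Sum.inl k := by
      show Sum.inl (σ (σ⁻¹ k)) = _
      rw [Equiv.Perm.apply_inv_self]
    show (Equiv.sumCongr σ τ)⁻¹ (Sum.inl k) = Sum.inl (σ⁻¹ k)
    rw [← this, Equiv.Perm.inv_apply_self]
  · have : (Equiv.sumCongr σ τ) (Sum.inr (τ⁻¹ y)) = Sum.inr y := by
      show Sum.inr (τ (τ⁻¹ y)) = _
      rw [Equiv.Perm.apply_inv_self]
    show (Equiv.sumCongr σ τ)⁻¹ (Sum.inr y) = Sum.inr (τ⁻¹ y)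
    rw [← this, Equiv.Perm.inv_apply_self]

def pA : Equiv.Perm (Fin 4) := Equiv.swap 0 1 * Equiv.swap 2 3
def pB : Equiv.Perm (Fin 4) := Equiv.swap 0 2 * Equiv.swap 1 3
def V01 : Fin 4 → Bool := ![true,true,false,false]
def V23 : Fin 4 → Bool := ![false,false,true,true]
def V02 : Fin 4 → Bool := ![true,false,true,false]
def V13 : Fin 4 → Bool := ![false,true,false,true]

theorem K4_decide_rev : ∀ ρ : Equiv.Perm (Fin 4),
    (V01 ∘ ρ = V01 ∨ V01 ∘ ρ = V23) → (V23 ∘ ρ = V01 ∨ V23 ∘ ρ = V23) →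
    (V02 ∘ ρ = V02 ∨ V02 ∘ ρ = V13) → (V13 ∘ ρ = V02 ∨ V13 ∘ ρ = V13) →
    (ρ = 1 ∨ ρ = pA ∨ ρ = pB ∨ ρ = pA * pB) := by decide

theorem K4_decide_fwd : ∀ ρ : Equiv.Perm (Fin 4),
    (ρ = 1 ∨ ρ = pA ∨ ρ = pB ∨ ρ = pA * pB) →
    ((V01 ∘ ρ = V01 ∨ V01 ∘ ρ = V23) ∧ (V23 ∘ ρ = V01 ∨ V23 ∘ ρ = V23) ∧
     (V02 ∘ ρ = V02 ∨ V02 ∘ ρ = V13) ∧ (V13 ∘ ρ = V02 ∨ V13 ∘ ρ = V13)) := by decide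

theorem mem_K4_iff (ρ : Equiv.Perm (Fin 4)) :
    ρ ∈ K4 ↔ (ρ = 1 ∨ ρ = pA ∨ ρ = pB ∨ ρ = pA * pB) := by
  constructor
  · intro h
    have hle : K4 ≤ Subgroup.mk
      { carrier := {ρ | ρ = 1 ∨ ρ = pA ∨ ρ = pB ∨ ρ = pA * pB}
        mul_mem' := by
          intro a b ha hb
          simp only [Set.mem_setOf_eq] at *
          rcases ha with rfl|rfl|rfl|rfl <;> rcases hb with rfl|rfl|rfl|rfl <;> decide
        one_mem' := by left; rfl }
      (by intro a ha; simp only [Set.mem_setOf_eq] at *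
          rcases ha with rfl|rfl|rfl|rfl <;> decide) := by
      apply Subgroup.closure_le _ |>.mpr
      intro s hs
      rcases hs with rfl | hs
      · right; left; rfl
      · rcases hs with rfl; right; right; left; rfl
    exact hle h
  · rintro (rfl|rfl|rfl|rfl)
    · exact one_mem _
    · exact Subgroup.subset_closure (by left; rfl)
    · exact Subgroup.subset_closure (by right; rfl)
    · exact mul_mem (Subgroup.subset_closure (by left; rfl))
        (Subgroup.subset_closure (by right; rfl))
-- AUX END
theorem subgroup_of_c2_directSum_representable
    {β : Type*} [Fintype β] (hβ : 2 ≤ Fintype.card β)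
    (H : Subgroup (Equiv.Perm β))
    (hH : Representable 2 H ∨ PermIso H K4)
    (hB : IsDirectSumOfRegular (directSum (Cgroup 2) H))
    (A : Subgroup (Equiv.Perm (Fin 2 ⊕ β))) (hA : A ≤ directSum (Cgroup 2) H) :
    Representable 2 A := by
  classical
  obtain ⟨ι, _inst1, bβ, _inst2, e, G, hreg, hmem⟩ := hB
  -- block function facts
  have hbl : ∀ π ∈ directSum (Cgroup 2) H, ∀ a, (e (π a)).1 = (e a).1 := by
    intro π hπ a
    obtain ⟨g, hg, hs⟩ := (hmem π).1 hπ
    rw [hs a]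
  -- swap element
  have hswapDS : Equiv.sumCongr (finRotate 2) (1 : Equiv.Perm β) ∈ directSum (Cgroup 2) H :=
    mem_directSum_iff.mpr ⟨Subgroup.mem_zpowers _, one_mem _⟩
  have hbl1 : (e (Sum.inl (1 : Fin 2))).1 = (e (Sum.inl (0 : Fin 2)) : Σ i, bβ i).1 := by
    have h := hbl _ hswapDS (Sum.inl 0)
    have h2 : (Equiv.sumCongr (finRotate 2) (1 : Equiv.Perm β)) (Sum.inl 0) =
        Sum.inl (1 : Fin 2) := by
      show Sum.inl ((finRotate 2) 0) = _
      norm_num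
    rw [h2] at h
    exact h
  -- inr points are in blocks different from the block of inl 0
  have hblr : ∀ y : β, (e (Sum.inr y)).1 ≠ (e (Sum.inl (0 : Fin 2)) : Σ i, bβ i).1 := by
    intro y hy
    obtain ⟨s, hs⟩ : ∃ s, s = e (Sum.inr y) := ⟨_, rfl⟩
    obtain ⟨i, yy⟩ := s
    have hi : i = (e (Sum.inl (0 : Fin 2))).1 := by rw [← hs] at hy; exact hy
    subst hi
    obtain ⟨γ, hγG, hγ⟩ := (hreg _).1 ((e (Sum.inl (0 : Fin 2))).2) yy
    set g : ∀ i, Equiv.Perm (bβ i) :=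
      Function.update (fun i => 1) (e (Sum.inl (0 : Fin 2))).1 γ with hgdef
    have hgmem : ∀ i, g i ∈ G i := by
      intro i
      rcases eq_or_ne i (e (Sum.inl (0 : Fin 2))).1 with h | h
      · subst h; simpa [hgdef] using hγG
      · rw [hgdef]; rw [Function.update_of_ne h]; exact one_mem _
    set π : Equiv.Perm (Fin 2 ⊕ β) := (e.trans (Equiv.sigmaCongrRight g)).trans e.symm with hπdef
    have hπa : ∀ a, e (π a) = ⟨(e a).1, g (e a).1 (e a).2⟩ := by
      intro a
      rw [hπdef]
      simp only [Equiv.trans_apply, Equiv.apply_symm_apply]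
      rcases hsa : e a with ⟨j, z⟩
      rfl
    have hπDS : π ∈ directSum (Cgroup 2) H := (hmem π).2 ⟨g, hgmem, hπa⟩
    obtain ⟨σ₀, τ₀, _, _, hform⟩ := exists_sumCongr_of_mem hπDS
    have h1 : π (Sum.inl 0) = Sum.inr y := by
      apply e.injective
      rw [hπa, ← hs]
      have hupd : g (e (Sum.inl (0 : Fin 2))).1 (e (Sum.inl (0 : Fin 2))).2 = yy := by
        rw [hgdef]; rw [Function.update_self]; exact hγ
      rw [hupd]
    rw [hform] at h1
    exact absurd h1 (by simp [Equiv.sumCongr_apply])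
  -- representative choice
  obtain ⟨rep, hrep⟩ : ∃ rep : ι → Fin 2 ⊕ β,
      ∀ i, (∃ a, (e a).1 = i) → (e (rep i)).1 = i := by
    refine ⟨fun i => if h : ∃ a, (e a).1 = i then Classical.choose h else Sum.inl 0, ?_⟩
    intro i h
    simp only [dif_pos h]
    exact Classical.choose_spec h
  obtain ⟨P, hPdef⟩ : ∃ P : (Fin 2 ⊕ β) → Prop, ∀ p, P p ↔
      (p = Sum.inl 0 ∨ ∃ i, i ≠ (e (Sum.inl (0 : Fin 2))).1 ∧ (∃ a, (e a).1 = i) ∧ p = rep i) :=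
    ⟨_, fun _ => Iff.rfl⟩
  have hP0 : P (Sum.inl 0) := (hPdef _).2 (Or.inl rfl)
  have hPinl : ∀ k : Fin 2, P (Sum.inl k) ↔ k = 0 := by
    intro k
    constructor
    · intro h
      rcases (hPdef _).1 h with h1 | ⟨i, hne, hex, hpe⟩
      · exact Sum.inl_injective h1
      · exfalso
        apply hne
        rw [← hrep i hex, ← hpe]
        rcases fin2_cases k with rfl | rfl
        · rfl
        · exact hbl1
    · rintro rfl; exact hP0
  have hPz : ∃ z : β, P (Sum.inr z) := by
    have hnb : Nonempty β := Fintype.card_pos_iff.mp (by omega)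
    obtain ⟨y0⟩ := hnb
    have hmemP : P (rep (e (Sum.inr y0)).1) :=
      (hPdef _).2 (Or.inr ⟨_, hblr y0, ⟨_, rfl⟩, rfl⟩)
    have hb : (e (rep (e (Sum.inr y0)).1)).1 = (e (Sum.inr y0)).1 := hrep _ ⟨_, rfl⟩
    rcases hrp : rep (e (Sum.inr y0)).1 with k | z
    · exfalso
      rw [hrp] at hb
      apply hblr y0
      rw [← hb]
      rcases fin2_cases k with rfl | rfl
      · rfl
      · exact hbl1
    · exact ⟨z, hrp ▸ hmemP⟩
  have hPuniq : ∀ p q, P p → P q → (e p).1 = (e q).1 → p = q := by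
    intro p q hp hq hpq
    rcases (hPdef _).1 hp with h1 | ⟨i, hne, hex, hpe⟩ <;>
      rcases (hPdef _).1 hq with h2 | ⟨j, hne', hex', hqe⟩
    · rw [h1, h2]
    · exfalso
      apply hne'
      rw [← hrep j hex', ← hqe, ← hpq, h1]
    · exfalso
      apply hne
      rw [← hrep i hex, ← hpe, hpq, h2]
    · have : i = j := by rw [← hrep i hex, ← hrep j hex', ← hpe, ← hqe, hpq]
      rw [hpe, hqe, this]
  have hPcover : ∀ a, ∃ p, P p ∧ (e p).1 = (e a).1 := by
    intro a
    by_cases h : (e a).1 = (e (Sum.inl (0 : Fin 2))).1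
    · exact ⟨Sum.inl 0, hP0, h.symm⟩
    · exact ⟨rep (e a).1, (hPdef _).2 (Or.inr ⟨(e a).1, h, ⟨a, rfl⟩, rfl⟩), hrep _ ⟨a, rfl⟩⟩
  -- rigidity
  have hrig : ∀ π, π ∈ directSum (Cgroup 2) H → ∀ π', π' ∈ directSum (Cgroup 2) H →
      (∀ p, P p → π p = π' p) → π = π' := by
    intro π hπ π' hπ' hagree
    obtain ⟨g, hg, hspec⟩ := (hmem π).1 hπ
    obtain ⟨g', hg', hspec'⟩ := (hmem π').1 hπ'
    have hgg : ∀ a : Fin 2 ⊕ β, g (e a).1 = g' (e a).1 := by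
      intro a
      obtain ⟨p, hp, hbp⟩ := hPcover a
      have h1 := hspec p
      rw [hagree p hp, hspec' p] at h1
      have hx : g' (e p).1 (e p).2 = g (e p).1 (e p).2 :=
        eq_of_heq (Sigma.mk.inj_iff.mp h1).2
      have hone : (g (e p).1)⁻¹ * g' (e p).1 = 1 :=
        (hreg (e p).1).2 _ (mul_mem (inv_mem (hg _)) (hg' _)) (e p).2
          (by rw [Equiv.Perm.mul_apply, hx, Equiv.Perm.inv_apply_self])
      have h2 : g (e p).1 = g' (e p).1 := by rwa [inv_mul_eq_one] at hone
      rw [← hbp]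
      exact h2
    apply Equiv.ext
    intro a
    apply e.injective
    rw [hspec a, hspec' a, hgg a]
  -- helper: contradiction from exactly-one-inl-true vs equal inl values
  have hcontra : ∀ (w : (Fin 2 ⊕ β) → Bool) (c : Fin 2),
      (∀ j : Fin 2, (w (Sum.inl j) = true ↔ j = c)) →
      w (Sum.inl 0) = w (Sum.inl 1) → False := by
    intro w c hw hc
    rcases fin2_cases c with rfl | rfl
    · have h0 : w (Sum.inl 0) = true := (hw 0).2 rfl
      have h1 : w (Sum.inl 1) = true := by rw [← hc]; exact h0
      exact absurd ((hw 1).1 h1) (by decide)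
    · have h0 : w (Sum.inl 1) = true := (hw 1).2 rfl
      have h1 : w (Sum.inl 0) = true := by rw [hc]; exact h0
      exact absurd ((hw 0).1 h1) (by decide)
  suffices main : ∀ Y : ((Fin 2 ⊕ β) → Bool) → Prop,
      (∀ (σ₀ : Equiv.Perm (Fin 2)) (τ₀ : Equiv.Perm β), τ₀ ∈ H →
        ∀ x, Y x → Y (x ∘ (Equiv.sumCongr σ₀ τ₀))) →
      (∀ x, Y x → ∃ q1 q2, q1 ≠ q2 ∧ x q1 = true ∧ x q2 = true) →
      (∀ x, Y x → x (Sum.inl 0) = x (Sum.inl 1)) →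
      (∀ (σ₀ : Equiv.Perm (Fin 2)) (τ₀ : Equiv.Perm β),
        (∀ x, Y x → Y (x ∘ (Equiv.sumCongr σ₀ τ₀))) → τ₀ ∈ H) →
      Representable 2 A by
    rcases hH with ⟨fH, hfH⟩ | ⟨e4, he4⟩
    · -- H is 2-representable
      refine main (fun x => (∀ k, x (Sum.inl k) = true) ∧ fH (fun y => x (Sum.inr y)) = 1)
        ?_ ?_ ?_ ?_
      · rintro σ₀ τ₀ hτ x ⟨hx1, hx2⟩
        refine ⟨fun k => hx1 (σ₀ k), ?_⟩
        have hτs : τ₀ ∈ symmGroup fH := hfH ▸ hτ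
        have h2 := mem_symmGroup.mp hτs (fun y => x (Sum.inr y))
        show fH (fun y => x (Sum.inr (τ₀ y))) = 1
        rw [show (fun y => x (Sum.inr (τ₀ y))) = (fun y => x (Sum.inr y)) ∘ τ₀ from rfl, h2]
        exact hx2
      · rintro x ⟨hx1, _⟩
        exact ⟨Sum.inl 0, Sum.inl 1,
          fun h => absurd (Sum.inl_injective h) (by decide), hx1 0, hx1 1⟩
      · rintro x ⟨hx1, _⟩
        rw [hx1 0, hx1 1]
      · intro σ₀ τ₀ hpres
        have hfwd2 : ∀ w : β → Bool, fH w = 1 → fH (w ∘ τ₀) = 1 := by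
          intro w hw
          have hx : (∀ k : Fin 2,
              (Sum.elim (fun _ => true) w : Fin 2 ⊕ β → Bool) (Sum.inl k) = true) ∧
              fH (fun y => (Sum.elim (fun _ => true) w : Fin 2 ⊕ β → Bool) (Sum.inr y)) = 1 :=
            ⟨fun _ => rfl, hw⟩
          have h2 := hpres _ hx
          exact h2.2
        have hinj2 : Function.Injective (fun w : β → Bool => w ∘ τ₀) := by
          intro w w' h
          funext y
          have h2 := congrFun h (τ₀⁻¹ y)
          simpa [Equiv.Perm.apply_inv_self] using h2
        have heq : (Finset.univ.filter (fun w : β → Bool => fH w = 1)).image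
            (fun w => w ∘ τ₀) = Finset.univ.filter (fun w : β → Bool => fH w = 1) := by
          apply Finset.eq_of_subset_of_card_le
          · intro vv hvv
            simp only [Finset.mem_image, Finset.mem_filter, Finset.mem_univ, true_and] at hvv ⊢
            obtain ⟨w, hw, rfl⟩ := hvv
            exact hfwd2 w hw
          · exact (Finset.card_image_of_injective _ hinj2).ge
        have hbwd : ∀ w : β → Bool, fH (w ∘ τ₀) = 1 → fH w = 1 := by
          intro w hw
          have hv : (w ∘ τ₀) ∈ Finset.univ.filter (fun w : β → Bool => fH w = 1) := by
            simp only [Finset.mem_filter, Finset.mem_univ, true_and]; exact hw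
          rw [← heq] at hv
          obtain ⟨w', hw', hww⟩ := Finset.mem_image.mp hv
          have h3 : w' = w := hinj2 hww
          subst h3
          simpa only [Finset.mem_filter, Finset.mem_univ, true_and] using hw'
        rw [hfH, mem_symmGroup]
        intro w
        rcases fin2_cases (fH w) with h | h
        · rcases fin2_cases (fH (w ∘ τ₀)) with h2 | h2
          · rw [h, h2]
          · exfalso
            have h3 := hbwd w h2
            rw [h] at h3
            exact absurd h3 (by decide)
        · rw [h, hfwd2 w h]
    · -- H is permutation isomorphic to K4
      have hWcomp : ∀ (x : (Fin 2 ⊕ β) → Bool) (σ₀ : Equiv.Perm (Fin 2)) (τ₀ : Equiv.Perm β),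
          (fun j => (x ∘ (Equiv.sumCongr σ₀ τ₀)) (Sum.inr (e4.symm j))) =
            (fun j => x (Sum.inr (e4.symm j))) ∘ (e4.permCongr τ₀) := by
        intro x σ₀ τ₀
        funext j
        show x (Sum.inr (τ₀ (e4.symm j))) = x (Sum.inr (e4.symm (e4.permCongr τ₀ j)))
        rw [Equiv.permCongr_apply, Equiv.symm_apply_apply]
      refine main (fun x =>
        ((∀ k, x (Sum.inl k) = true) ∧
          ((fun j => x (Sum.inr (e4.symm j))) = V01 ∨ (fun j => x (Sum.inr (e4.symm j))) = V23)) ∨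
        ((∀ k, x (Sum.inl k) = false) ∧
          ((fun j => x (Sum.inr (e4.symm j))) = V02 ∨ (fun j => x (Sum.inr (e4.symm j))) = V13)))
        ?_ ?_ ?_ ?_
      · rintro σ₀ τ₀ hτ x hx
        have hρ := (mem_K4_iff _).1 ((he4 τ₀).1 hτ)
        obtain ⟨c1, c2, c3, c4⟩ := K4_decide_fwd _ hρ
        rcases hx with ⟨h1, h2⟩ | ⟨h1, h2⟩
        · left
          refine ⟨fun k => h1 (σ₀ k), ?_⟩
          rw [hWcomp]
          rcases h2 with h2 | h2
          · rw [h2]; exact c1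
          · rw [h2]; exact c2
        · right
          refine ⟨fun k => h1 (σ₀ k), ?_⟩
          rw [hWcomp]
          rcases h2 with h2 | h2
          · rw [h2]; exact c3
          · rw [h2]; exact c4
      · rintro x (⟨h1, _⟩ | ⟨h1, h2⟩)
        · exact ⟨Sum.inl 0, Sum.inl 1,
            fun h => absurd (Sum.inl_injective h) (by decide), h1 0, h1 1⟩
        · rcases h2 with h2 | h2
          · refine ⟨Sum.inr (e4.symm 0), Sum.inr (e4.symm 2), ?_, ?_, ?_⟩
            · intro h
              exact absurd (e4.symm.injective (Sum.inr_injective h)) (by decide)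
            · have h3 := congrFun h2 0
              rw [show V02 0 = true from by decide] at h3
              exact h3
            · have h3 := congrFun h2 2
              rw [show V02 2 = true from by decide] at h3
              exact h3
          · refine ⟨Sum.inr (e4.symm 1), Sum.inr (e4.symm 3), ?_, ?_, ?_⟩
            · intro h
              exact absurd (e4.symm.injective (Sum.inr_injective h)) (by decide)
            · have h3 := congrFun h2 1
              rw [show V13 1 = true from by decide] at h3
              exact h3
            · have h3 := congrFun h2 3
              rw [show V13 3 = true from by decide] at h3
              exact h3
      · rintro x (⟨h1, _⟩ | ⟨h1, _⟩)
        · rw [h1 0, h1 1]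
        · rw [h1 0, h1 1]
      · intro σ₀ τ₀ hpres
        have hmk : ∀ (W : Fin 4 → Bool) (b : Bool),
            (fun j => (Sum.elim (fun _ => b) (fun y => W (e4 y)) : Fin 2 ⊕ β → Bool)
              (Sum.inr (e4.symm j))) = W := by
          intro W b
          funext j
          show W (e4 (e4.symm j)) = W j
          rw [Equiv.apply_symm_apply]
        have hcond1 : ∀ W : Fin 4 → Bool, (W = V01 ∨ W = V23) →
            (W ∘ (e4.permCongr τ₀) = V01 ∨ W ∘ (e4.permCongr τ₀) = V23) := by
          intro W hW
          have h2 := hpres (Sum.elim (fun _ => true) (fun y => W (e4 y)))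
            (Or.inl ⟨fun _ => rfl, by rw [hmk]; exact hW⟩)
          rcases h2 with ⟨_, h3⟩ | ⟨h3, _⟩
          · rw [hWcomp, hmk] at h3
            exact h3
          · exact absurd (h3 0) (by simp)
        have hcond2 : ∀ W : Fin 4 → Bool, (W = V02 ∨ W = V13) →
            (W ∘ (e4.permCongr τ₀) = V02 ∨ W ∘ (e4.permCongr τ₀) = V13) := by
          intro W hW
          have h2 := hpres (Sum.elim (fun _ => false) (fun y => W (e4 y)))
            (Or.inr ⟨fun _ => rfl, by rw [hmk]; exact hW⟩)
          rcases h2 with ⟨h3, _⟩ | ⟨_, h3⟩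
          · exact absurd (h3 0) (by simp)
          · rw [hWcomp, hmk] at h3
            exact h3
        have hρ := K4_decide_rev (e4.permCongr τ₀) (hcond1 V01 (Or.inl rfl))
          (hcond1 V23 (Or.inr rfl)) (hcond2 V02 (Or.inl rfl)) (hcond2 V13 (Or.inr rfl))
        exact (he4 τ₀).2 ((mem_K4_iff _).2 hρ)
  intro Y hYa hYb hYc hYd
  obtain ⟨XX, hXX⟩ : ∃ XX : ((Fin 2 ⊕ β) → Bool) → Prop, ∀ x, XX x ↔
      ((∃ k : Fin 2, ∀ q, x q = true ↔ q = Sum.inl k) ∨ Y x ∨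
       (∃ π, π ∈ A ∧ ∀ q, x q = true ↔ P (π⁻¹ q))) := ⟨_, fun _ => Iff.rfl⟩
  refine ⟨fun x => if XX x then 1 else 0, ?_⟩
  have hfwd : ∀ π, π ∈ A → ∀ x, XX x → XX (x ∘ π) := by
    intro π hπ x hx
    obtain ⟨σ', τ', hσ'C, hτ'H, hform⟩ := exists_sumCongr_of_mem (hA hπ)
    rw [hXX] at hx ⊢
    rcases hx with ⟨k, hk⟩ | hY | ⟨g, hgA, hg⟩
    · left
      have hπk : π (Sum.inl (σ'⁻¹ k)) = Sum.inl k := by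
        rw [hform]
        show Sum.inl (σ' (σ'⁻¹ k)) = _
        rw [Equiv.Perm.apply_inv_self]
      refine ⟨σ'⁻¹ k, fun q => ?_⟩
      rw [Function.comp_apply, hk (π q), ← hπk, EquivLike.apply_eq_iff_eq]
    · right; left
      rw [hform]
      exact hYa σ' τ' hτ'H x hY
    · right; right
      refine ⟨π⁻¹ * g, mul_mem (inv_mem hπ) hgA, fun q => ?_⟩
      rw [Function.comp_apply, hg (π q)]
      rw [mul_inv_rev, inv_inv, Equiv.Perm.mul_apply]
  have hiffA : ∀ π, π ∈ A → ∀ x, XX (x ∘ π) ↔ XX x := by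
    intro π hπ x
    constructor
    · intro h
      have h2 := hfwd π⁻¹ (inv_mem hπ) _ h
      have hxe : (x ∘ π) ∘ (π⁻¹ : Equiv.Perm (Fin 2 ⊕ β)) = x := by
        funext q
        simp [Function.comp, Equiv.Perm.apply_inv_self]
      rwa [hxe] at h2
    · exact hfwd π hπ x
  apply le_antisymm
  · -- A ≤ symmGroup f
    intro π hπ
    rw [mem_symmGroup]
    intro x
    exact if_congr (hiffA π hπ x) rfl rfl
  · -- symmGroup f ≤ A
    intro σ hσ
    have hσiff : ∀ x, XX (x ∘ σ) ↔ XX x := by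
      intro x
      have h := mem_symmGroup.mp hσ x
      by_cases h1 : XX (x ∘ σ) <;> by_cases h2 : XX x
      · exact iff_of_true h1 h2
      · rw [if_pos h1, if_neg h2] at h; exact absurd h (by decide)
      · rw [if_neg h1, if_pos h2] at h; exact absurd h (by decide)
      · exact iff_of_false h1 h2
    have hσinviff : ∀ x, XX (x ∘ (σ⁻¹ : Equiv.Perm (Fin 2 ⊕ β))) ↔ XX x := by
      intro x
      have h := hσiff (x ∘ (σ⁻¹ : Equiv.Perm (Fin 2 ⊕ β)))
      have hxe : (x ∘ (σ⁻¹ : Equiv.Perm (Fin 2 ⊕ β))) ∘ σ = x := by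
        funext q
        simp [Function.comp, Equiv.Perm.inv_apply_self]
      rw [hxe] at h
      exact h.symm
    -- singleton analysis
    have hsingle : ∀ (τ : Equiv.Perm (Fin 2 ⊕ β)), (∀ x, XX (x ∘ τ) ↔ XX x) →
        ∀ k : Fin 2, ∃ k', τ⁻¹ (Sum.inl k) = Sum.inl k' := by
      intro τ hτ k
      have hx : XX (fun q => decide (q = Sum.inl k)) :=
        (hXX _).2 (Or.inl ⟨k, fun q => by simp⟩)
      have hx2 := (hτ (fun q => decide (q = Sum.inl k))).2 hx
      rw [hXX] at hx2
      rcases hx2 with ⟨k', hk'⟩ | hY | ⟨g, hgA, hg⟩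
      · have h1 : τ (Sum.inl k') = Sum.inl k := by
          have h2 := (hk' (Sum.inl k')).2 rfl
          simpa using h2
        exact ⟨k', by rw [← h1, Equiv.Perm.inv_apply_self]⟩
      · exfalso
        obtain ⟨q1, q2, hne, h1, h2⟩ := hYb _ hY
        have e1 : τ q1 = Sum.inl k := by simpa using h1
        have e2 : τ q2 = Sum.inl k := by simpa using h2
        exact hne (τ.injective (e1.trans e2.symm))
      · exfalso
        obtain ⟨z, hz⟩ := hPz
        have h1 : τ (g (Sum.inl 0)) = Sum.inl k := by
          have h2 := (hg (g (Sum.inl 0))).2 (by rwa [Equiv.Perm.inv_apply_self])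
          simpa using h2
        have h3 : τ (g (Sum.inr z)) = Sum.inl k := by
          have h2 := (hg (g (Sum.inr z))).2 (by rwa [Equiv.Perm.inv_apply_self])
          simpa using h2
        have : g (Sum.inl 0) = g (Sum.inr z) := τ.injective (h1.trans h3.symm)
        simpa using g.injective this
    have hl : ∀ k : Fin 2, ∃ k', σ (Sum.inl k) = Sum.inl k' := by
      intro k
      obtain ⟨k', hk'⟩ := hsingle σ⁻¹ hσinviff k
      rw [inv_inv] at hk'
      exact ⟨k', hk'⟩
    have hr : ∀ y : β, ∃ y', σ (Sum.inr y) = Sum.inr y' := by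
      intro y
      rcases hc : σ (Sum.inr y) with k | y'
      · exfalso
        obtain ⟨k', hk'⟩ := hsingle σ hσiff k
        have h2 : σ⁻¹ (Sum.inl k) = Sum.inr y := by rw [← hc, Equiv.Perm.inv_apply_self]
        rw [h2] at hk'
        exact Sum.inr_ne_inl hk'
      · exact ⟨y', rfl⟩
    choose u hu using hl
    choose v hv using hr
    have huinj : Function.Injective u := by
      intro k k' h
      have h2 : σ (Sum.inl k) = σ (Sum.inl k') := by rw [hu k, hu k', h]
      exact Sum.inl_injective (σ.injective h2)
    have hvinj : Function.Injective v := by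
      intro y y' h
      have h2 : σ (Sum.inr y) = σ (Sum.inr y') := by rw [hv y, hv y', h]
      exact Sum.inr_injective (σ.injective h2)
    obtain ⟨σ₀, hσ₀⟩ : ∃ σ₀ : Equiv.Perm (Fin 2), ∀ k, σ₀ k = u k :=
      ⟨Equiv.ofBijective u (Finite.injective_iff_bijective.mp huinj), fun _ => rfl⟩
    obtain ⟨τ₀, hτ₀⟩ : ∃ τ₀ : Equiv.Perm β, ∀ y, τ₀ y = v y :=
      ⟨Equiv.ofBijective v (Finite.injective_iff_bijective.mp hvinj), fun _ => rfl⟩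
    have hform : σ = Equiv.sumCongr σ₀ τ₀ := by
      apply Equiv.ext
      intro q
      rcases q with k | y
      · show σ (Sum.inl k) = Sum.inl (σ₀ k)
        rw [hσ₀ k]; exact hu k
      · show σ (Sum.inr y) = Sum.inr (τ₀ y)
        rw [hτ₀ y]; exact hv y
    -- values at inl are "equal-or-single" analysis
    have hYpres : ∀ x, Y x → Y (x ∘ (Equiv.sumCongr σ₀ τ₀)) := by
      intro x hY
      have hx : XX x := (hXX x).2 (Or.inr (Or.inl hY))
      have hx2 : XX (x ∘ σ) := (hσiff x).2 hx
      have hconst : (x ∘ σ) (Sum.inl 0) = (x ∘ σ) (Sum.inl 1) := by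
        have hv0 : (x ∘ σ) (Sum.inl 0) = x (Sum.inl (σ₀ 0)) := by rw [hform]; rfl
        have hv1 : (x ∘ σ) (Sum.inl 1) = x (Sum.inl (σ₀ 1)) := by rw [hform]; rfl
        rw [hv0, hv1]
        rcases perm2_cases σ₀ with ⟨h0, h1⟩ | ⟨h0, h1⟩ <;> rw [h0, h1]
        · exact hYc x hY
        · exact (hYc x hY).symm
      rw [hXX] at hx2
      rcases hx2 with ⟨k, hk⟩ | hY2 | ⟨g, hgA, hg⟩
      · exact absurd hconst (fun hc => hcontra _ k (fun j => by rw [hk]; simp) hc)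
      · rw [← hform]; exact hY2
      · exfalso
        obtain ⟨σ', τ', _, _, hgform⟩ := exists_sumCongr_of_mem (hA hgA)
        apply hcontra (x ∘ σ) (σ' 0) ?_ hconst
        intro j
        have hginv : g⁻¹ (Sum.inl j) = Sum.inl (σ'⁻¹ j) := by
          rw [hgform, sumCongr_inv]; rfl
        rw [hg (Sum.inl j), hginv, hPinl]
        constructor
        · intro h; rw [← h, Equiv.Perm.apply_inv_self]
        · intro h; rw [h, Equiv.Perm.inv_apply_self]
    have hτH : τ₀ ∈ H := hYd σ₀ τ₀ hYpres
    have hσDS : σ ∈ directSum (Cgroup 2) H := by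
      rw [hform]
      exact mem_directSum_iff.mpr ⟨mem_Cgroup2 σ₀, hτH⟩
    -- final step: pin down σ as an element of A
    have hxP : XX (fun q => decide (P q)) :=
      (hXX _).2 (Or.inr (Or.inr ⟨1, one_mem A, fun q => by simp⟩))
    have hx2 : XX ((fun q => decide (P q)) ∘ (σ⁻¹ : Equiv.Perm (Fin 2 ⊕ β))) :=
      (hσinviff _).2 hxP
    rw [hXX] at hx2
    rcases hx2 with ⟨k, hk⟩ | hY2 | ⟨g, hgA, hg⟩
    · exfalso
      obtain ⟨z, hz⟩ := hPz
      have h1 : σ (Sum.inl 0) = Sum.inl k := by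
        have h2 := (hk (σ (Sum.inl 0))).1 (by simp [Equiv.Perm.inv_apply_self, hP0])
        exact h2
      have h3 : σ (Sum.inr z) = Sum.inl k := by
        have h2 := (hk (σ (Sum.inr z))).1 (by simp [Equiv.Perm.inv_apply_self, hz])
        exact h2
      have h4 := σ.injective (h1.trans h3.symm)
      exact Sum.inl_ne_inr h4
    · exfalso
      apply hcontra _ (σ₀ 0) ?_ (hYc _ hY2)
      intro j
      have hsinv : σ⁻¹ (Sum.inl j) = Sum.inl (σ₀⁻¹ j) := by
        rw [hform, sumCongr_inv]; rfl
      show decide (P (σ⁻¹ (Sum.inl j))) = true ↔ j = σ₀ 0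
      rw [hsinv]
      simp only [decide_eq_true_eq]
      rw [hPinl]
      constructor
      · intro h; rw [← h, Equiv.Perm.apply_inv_self]
      · intro h; rw [h, Equiv.Perm.inv_apply_self]
    · have hagree : ∀ p, P p → σ p = g p := by
        intro p hp
        have h1 : P (g⁻¹ (σ p)) := by
          have h2 := (hg (σ p)).1 (by simp [Equiv.Perm.inv_apply_self, hp])
          exact h2
        have hb : (e (g⁻¹ (σ p))).1 = (e p).1 := by
          have hσb := hbl σ hσDS p
          have hgb := hbl g⁻¹ (inv_mem (hA hgA)) (σ p)
          rw [hσb] at hgb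
          exact hgb
        have h3 : g⁻¹ (σ p) = p := hPuniq _ _ h1 hp hb
        have h4 := congrArg g h3
        rwa [Equiv.Perm.apply_inv_self] at h4
      have hfin : σ = g := hrig σ hσDS g (hA hgA) hagree
      rw [hfin]
      exact hgA
end
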